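/- arXiv:2308.15598 — 5 statements merged into one kernel-verified Lean document; each statement's English description precedes it below -/
import Mathlib

section
/- Let (α, S, β) be a reducible decomposition of the facet family 𝓕 and let p ∈ Δ_R have strictly positive S-marginal p_S. Suppose v ∈ Q^α_{p_α} maximizes D_{M_{𝓕_α}} over Q^α_{p_α}, w ∈ Q^β_{p_β} maximizes D_{M_{𝓕_β}} over Q^β_{p_β}, and p' ∈ Q_p maximizes D_{M_𝓕} over Q_p. Then D_{M_𝓕}(p') ≥ D_{M_{𝓕_α}}(v) + D_{M_{𝓕_β}}(w). -/
open scoped BigOperators Pointwise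

attribute [local instance] Classical.propDecidable

def simplex (ι : Type*) [Fintype ι] : Set (ι → ℝ) :=
  {p | (∀ i, 0 ≤ p i) ∧ ∑ i, p i = 1}

noncomputable def KL {ι : Type*} [Fintype ι] (p q : ι → ℝ) : EReal :=
  if ∀ i, q i = 0 → p i = 0 then (((∑ i, p i * Real.log (p i / q i)) : ℝ) : EReal) else ⊤

noncomputable def divFrom {ι : Type*} [Fintype ι] (M : Set (ι → ℝ)) (p : ι → ℝ) : EReal :=
  ⨅ q ∈ M, KL p q

/-- The `F`-marginal of a function on the full state space `∀ i, Fin (d i)`. -/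
noncomputable def margF {m : ℕ} (d : Fin m → ℕ) (F : Finset (Fin m))
    (p : (∀ i, Fin (d i)) → ℝ) : ((i : {j // j ∈ F}) → Fin (d i.1)) → ℝ :=
  fun y => ∑ x : ∀ i, Fin (d i), if (∀ i : {j // j ∈ F}, x i.1 = y i) then p x else 0

/-- The `F`-marginal of a function on the partial state space indexed by `α` (meant for
`F ⊆ α`; indices of `F` outside `α` are ignored). -/
noncomputable def margSub {m : ℕ} (d : Fin m → ℕ) (α F : Finset (Fin m))
    (u : ((i : {j // j ∈ α}) → Fin (d i.1)) → ℝ) :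
    ((i : {j // j ∈ F}) → Fin (d i.1)) → ℝ :=
  fun y => ∑ xa : (i : {j // j ∈ α}) → Fin (d i.1),
    if (∀ (i : Fin m) (hiF : i ∈ F) (hia : i ∈ α), xa ⟨i, hia⟩ = y ⟨i, hiF⟩)
      then u xa else 0

/-- The hierarchical log-linear model with facet family `𝓕` on the full state space. -/
noncomputable def hierModel {m : ℕ} (d : Fin m → ℕ) (𝓕 : Finset (Finset (Fin m))) :
    Set ((∀ i, Fin (d i)) → ℝ) :=
  {p | p ∈ simplex (∀ i, Fin (d i)) ∧
    ∃ θ : (F : {F // F ∈ 𝓕}) → (((i : {j // j ∈ F.1}) → Fin (d i.1)) → ℝ),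
      (∀ F y, 0 < θ F y) ∧ ∃ Z : ℝ, 0 < Z ∧
        ∀ x, p x = (1 / Z) * ∏ F : {F // F ∈ 𝓕}, θ F (fun i => x i.1)}

/-- The hierarchical log-linear model on the partial state space indexed by `α`, for a facet
family `𝓕'` all of whose members are contained in `α`. -/
noncomputable def hierModelSub {m : ℕ} (d : Fin m → ℕ) (α : Finset (Fin m))
    (𝓕' : Finset (Finset (Fin m))) (h : ∀ F ∈ 𝓕', F ⊆ α) :
    Set (((i : {j // j ∈ α}) → Fin (d i.1)) → ℝ) :=
  {p | p ∈ simplex ((i : {j // j ∈ α}) → Fin (d i.1)) ∧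
    ∃ θ : (F : {F // F ∈ 𝓕'}) → (((i : {j // j ∈ F.1}) → Fin (d i.1)) → ℝ),
      (∀ F y, 0 < θ F y) ∧ ∃ Z : ℝ, 0 < Z ∧
        ∀ xa, p xa = (1 / Z) * ∏ F : {F // F ∈ 𝓕'},
          θ F (fun i => xa ⟨i.1, h F.1 F.2 i.2⟩)}

namespace Stmt14Aux

variable {m : ℕ} (d : Fin m → ℕ)

/-- configurations on a subset of coordinates -/
abbrev Cfg (γ : Finset (Fin m)) := (i : {j // j ∈ γ}) → Fin (d i.1)

def res (γ : Finset (Fin m)) (x : ∀ i, Fin (d i)) : Cfg d γ := fun i => x i.1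

def resSub {γ δ : Finset (Fin m)} (h : δ ⊆ γ) (y : Cfg d γ) : Cfg d δ :=
  fun i => y ⟨i.1, h i.2⟩

lemma margF_eq (F : Finset (Fin m)) (p : (∀ i, Fin (d i)) → ℝ) (y : Cfg d F) :
    margF d F p y = ∑ x : ∀ i, Fin (d i), if res d F x = y then p x else 0 := by
  refine Finset.sum_congr rfl fun x _ => ?_
  refine if_congr ⟨fun h => funext fun i => h i, fun h i => congrFun h i⟩ rfl rfl

lemma margSub_eq {γ F : Finset (Fin m)} (hFγ : F ⊆ γ) (u : Cfg d γ → ℝ) (y : Cfg d F) :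
    margSub d γ F u y = ∑ xa : Cfg d γ, if resSub d hFγ xa = y then u xa else 0 := by
  refine Finset.sum_congr rfl fun xa _ => ?_
  refine if_congr ⟨fun h => funext fun i => h i.1 i.2 (hFγ i.2), fun h i hiF hia => ?_⟩ rfl rfl
  exact congrFun h ⟨i, hiF⟩

lemma ite_swap_zero {A B : Prop} [Decidable A] [Decidable B] (t : ℝ) :
    (if A then (if B then t else 0) else 0) = if B then (if A then t else 0) else 0 := by
  split_ifs <;> rfl

lemma margSub_margF {γ F : Finset (Fin m)} (hFγ : F ⊆ γ) (u : (∀ i, Fin (d i)) → ℝ) :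
    margSub d γ F (margF d γ u) = margF d F u := by
  funext y
  rw [margSub_eq d hFγ, margF_eq]
  have h1 : ∀ xa : Cfg d γ, (if resSub d hFγ xa = y then margF d γ u xa else 0)
      = ∑ x : ∀ i, Fin (d i), if res d γ x = xa then (if resSub d hFγ xa = y then u x else 0)
        else 0 := by
    intro xa
    split_ifs with h
    · exact margF_eq d γ u xa
    · exact (Finset.sum_eq_zero fun x _ => ite_self 0).symm
  rw [Finset.sum_congr rfl fun xa _ => h1 xa, Finset.sum_comm]
  refine Finset.sum_congr rfl fun x _ => ?_
  rw [Finset.sum_ite_eq (Finset.univ) (res d γ x)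
    (fun xa => if resSub d hFγ xa = y then u x else 0)]
  simp only [Finset.mem_univ, if_true]
  rfl

lemma margSub_margSub {γ F G : Finset (Fin m)} (hGF : G ⊆ F) (hFγ : F ⊆ γ)
    (u : Cfg d γ → ℝ) :
    margSub d F G (margSub d γ F u) = margSub d γ G u := by
  funext y
  rw [margSub_eq d hGF, margSub_eq d (hGF.trans hFγ)]
  have h1 : ∀ xF : Cfg d F, (if resSub d hGF xF = y then margSub d γ F u xF else 0)
      = ∑ xa : Cfg d γ, if resSub d hFγ xa = xF then (if resSub d hGF xF = y then u xa else 0)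
        else 0 := by
    intro xF
    split_ifs with h
    · exact margSub_eq d hFγ u xF
    · exact (Finset.sum_eq_zero fun xa _ => ite_self 0).symm
  rw [Finset.sum_congr rfl fun xF _ => h1 xF, Finset.sum_comm]
  refine Finset.sum_congr rfl fun xa _ => ?_
  rw [Finset.sum_ite_eq (Finset.univ) (resSub d hFγ xa)
    (fun xF => if resSub d hGF xF = y then u xa else 0)]
  simp only [Finset.mem_univ, if_true]
  rfl

lemma sum_margF (F : Finset (Fin m)) (p : (∀ i, Fin (d i)) → ℝ) :
    ∑ y : Cfg d F, margF d F p y = ∑ x : ∀ i, Fin (d i), p x := by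
  simp_rw [margF_eq]
  rw [Finset.sum_comm]
  refine Finset.sum_congr rfl fun x _ => ?_
  rw [Finset.sum_ite_eq (Finset.univ) (res d F x) (fun _ => p x)]
  simp

lemma sum_margSub {γ G : Finset (Fin m)} (hGγ : G ⊆ γ) (f : Cfg d γ → ℝ) :
    ∑ s : Cfg d G, margSub d γ G f s = ∑ y : Cfg d γ, f y := by
  simp_rw [margSub_eq d hGγ]
  rw [Finset.sum_comm]
  refine Finset.sum_congr rfl fun y _ => ?_
  rw [Finset.sum_ite_eq (Finset.univ) (resSub d hGγ y) (fun _ => f y)]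
  simp

lemma sum_mul_resSub {γ G : Finset (Fin m)} (hGγ : G ⊆ γ) (f : Cfg d γ → ℝ)
    (g : Cfg d G → ℝ) :
    ∑ y : Cfg d γ, f y * g (resSub d hGγ y) = ∑ s : Cfg d G, margSub d γ G f s * g s := by
  simp_rw [margSub_eq d hGγ, Finset.sum_mul, ite_mul, zero_mul]
  rw [Finset.sum_comm]
  refine Finset.sum_congr rfl fun y _ => ?_
  have h2 : ∀ s : Cfg d G, (if resSub d hGγ y = s then f y * g s else 0)
      = if resSub d hGγ y = s then f y * g (resSub d hGγ y) else 0 := by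
    intro s; split_ifs with h
    · rw [h]
    · rfl
  rw [Finset.sum_congr rfl fun s _ => h2 s,
    Finset.sum_ite_eq (Finset.univ) (resSub d hGγ y)
      (fun _ => f y * g (resSub d hGγ y))]
  simp

section Glue

variable (α β : Finset (Fin m)) (hunion : α ∪ β = Finset.univ)
include hunion

def glue (y : Cfg d α) (z : Cfg d β) : ∀ i, Fin (d i) := fun i =>
  if h : i ∈ α then y ⟨i, h⟩ else
    z ⟨i, (Finset.mem_union.mp (hunion ▸ Finset.mem_univ i)).resolve_left h⟩

lemma res_glue_left (y : Cfg d α) (z : Cfg d β) :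
    res d α (glue d α β hunion y z) = y := by
  funext i
  exact dif_pos i.2

lemma res_glue_right (y : Cfg d α) (z : Cfg d β)
    (hc : resSub d (Finset.inter_subset_left) y = resSub d (Finset.inter_subset_right) z) :
    res d β (glue d α β hunion y z) = z := by
  funext i
  show glue d α β hunion y z i.1 = z i
  by_cases h : i.1 ∈ α
  · have := congrFun hc ⟨i.1, Finset.mem_inter.mpr ⟨h, i.2⟩⟩
    simpa [glue, resSub, dif_pos h] using this
  · simp [glue, dif_neg h]

lemma sum_glue (f : Cfg d α → ℝ) (g : Cfg d β → ℝ) :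
    ∑ x : ∀ i, Fin (d i), f (res d α x) * g (res d β x)
      = ∑ y : Cfg d α, ∑ z : Cfg d β,
          if resSub d (Finset.inter_subset_left) y = resSub d (Finset.inter_subset_right) z
            then f y * g z else 0 := by
  have key : ∀ (y : Cfg d α) (z : Cfg d β),
      (if resSub d (Finset.inter_subset_left) y = resSub d (Finset.inter_subset_right) z
        then f y * g z else 0)
      = ∑ x : ∀ i, Fin (d i), if res d α x = y ∧ res d β x = z
          then f (res d α x) * g (res d β x) else 0 := by
    intro y z
    by_cases hc : resSub d (Finset.inter_subset_left) y
        = resSub d (Finset.inter_subset_right) z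
    · rw [if_pos hc]
      have hiff : ∀ x : ∀ i, Fin (d i),
          (res d α x = y ∧ res d β x = z) ↔ x = glue d α β hunion y z := by
        intro x
        constructor
        · rintro ⟨h1, h2⟩
          funext i
          by_cases h : i ∈ α
          · show x i = glue d α β hunion y z i
            rw [glue, dif_pos h]
            exact congrFun h1 ⟨i, h⟩
          · show x i = glue d α β hunion y z i
            rw [glue, dif_neg h]
            exact congrFun h2 ⟨i, _⟩
        · rintro rfl
          exact ⟨res_glue_left d α β hunion y z, res_glue_right d α β hunion y z hc⟩
      rw [Finset.sum_congr rfl fun x _ => if_congr (hiff x) rfl rfl,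
        Finset.sum_ite_eq' (Finset.univ) (glue d α β hunion y z)
          (fun x => f (res d α x) * g (res d β x))]
      simp only [Finset.mem_univ, if_true]
      rw [res_glue_left d α β hunion y z, res_glue_right d α β hunion y z hc]
    · rw [if_neg hc]
      refine (Finset.sum_eq_zero fun x _ => ?_).symm
      rw [if_neg]
      rintro ⟨rfl, rfl⟩
      exact hc rfl
  rw [Finset.sum_congr rfl fun y _ => Finset.sum_congr rfl fun z _ => key y z]
  rw [Finset.sum_congr rfl fun y (_ : y ∈ Finset.univ) =>
    (Finset.sum_comm : (∑ z : Cfg d β, ∑ x : ∀ i, Fin (d i), _) = _), Finset.sum_comm]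
  refine Finset.sum_congr rfl fun x _ => ?_
  have h1 : ∀ y : Cfg d α, (∑ z : Cfg d β, if res d α x = y ∧ res d β x = z
      then f (res d α x) * g (res d β x) else 0)
      = if res d α x = y then f (res d α x) * g (res d β x) else 0 := by
    intro y
    rcases eq_or_ne (res d α x) y with hy | hy
    · rw [if_pos hy]
      rw [Finset.sum_congr rfl fun z (_ : z ∈ Finset.univ) =>
        if_congr (and_iff_right hy) rfl rfl,
        Finset.sum_ite_eq (Finset.univ) (res d β x)
          (fun _ => f (res d α x) * g (res d β x))]
      simp
    · rw [if_neg hy, Finset.sum_eq_zero]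
      intro z _
      rw [if_neg (fun hc => hy hc.1)]
  rw [Finset.sum_congr rfl fun y _ => h1 y,
    Finset.sum_ite_eq (Finset.univ) (res d α x)
      (fun _ => f (res d α x) * g (res d β x))]
  simp

lemma sum_compat_right (y : Cfg d α) (g : Cfg d β → ℝ) :
    ∑ z : Cfg d β,
        (if resSub d (Finset.inter_subset_left) y = resSub d (Finset.inter_subset_right) z
          then g z else 0)
      = margSub d β (α ∩ β) g (resSub d (Finset.inter_subset_left) y) := by
  rw [margSub_eq d (Finset.inter_subset_right)]
  exact Finset.sum_congr rfl fun z _ => if_congr eq_comm rfl rfl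

lemma sum_compat_left (z : Cfg d β) (f : Cfg d α → ℝ) :
    ∑ y : Cfg d α,
        (if resSub d (Finset.inter_subset_left) y = resSub d (Finset.inter_subset_right) z
          then f y else 0)
      = margSub d α (α ∩ β) f (resSub d (Finset.inter_subset_right) z) := by
  rw [margSub_eq d (Finset.inter_subset_left)]

end Glue

lemma prod_subtype_dite {γ : Type*} {M : Type*} [CommMonoid M] (s : Finset γ)
    (f : {x // x ∈ s} → M) :
    ∏ x : {x // x ∈ s}, f x = ∏ x ∈ s, if h : x ∈ s then f ⟨x, h⟩ else 1 := by
  rw [Finset.univ_eq_attach, ← Finset.prod_attach s fun x => if h : x ∈ s then f ⟨x, h⟩ else 1]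
  exact Finset.prod_congr rfl fun x _ => by rw [dif_pos x.2]

lemma isClosed_simplex (ι : Type*) [Fintype ι] : IsClosed (simplex ι) := by
  have : simplex ι = (⋂ i : ι, {p : ι → ℝ | 0 ≤ p i}) ∩ {p : ι → ℝ | ∑ i, p i = 1} := by
    ext p
    simp [simplex, Set.mem_iInter]
  rw [this]
  refine IsClosed.inter (isClosed_iInter fun i => ?_) ?_
  · exact isClosed_le continuous_const (continuous_apply i)
  · exact isClosed_eq (continuous_finset_sum _ fun i _ => continuous_apply i) continuous_const

lemma closure_KL_bound {ι : Type*} [Fintype ι] (M : Set (ι → ℝ)) (hM : M ⊆ simplex ι)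
    (hpos : ∀ q ∈ M, ∀ x, 0 < q x) (u : ι → ℝ) (C : EReal)
    (h : ∀ q ∈ M, C ≤ KL u q) : ∀ q ∈ closure M, C ≤ KL u q := by
  intro q hq
  rcases mem_closure_iff_seq_limit.mp hq with ⟨qn, hqn, hqt⟩
  by_cases hsupp : ∀ i, q i = 0 → u i = 0
  · have hqsimp : q ∈ simplex ι := closure_minimal hM (isClosed_simplex ι) hq
    have hKLn : ∀ n, KL u (qn n) = ((∑ i, u i * Real.log (u i / qn n i) : ℝ) : EReal) := by
      intro n
      rw [KL, if_pos fun i hi => absurd hi (ne_of_gt (hpos _ (hqn n) i))]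
    have htend : Filter.Tendsto (fun n => ∑ i, u i * Real.log (u i / qn n i))
        Filter.atTop (nhds (∑ i, u i * Real.log (u i / q i))) := by
      refine tendsto_finset_sum _ fun i _ => ?_
      rcases eq_or_ne (u i) 0 with hui | hui
      · simp only [hui, zero_mul]
        exact tendsto_const_nhds
      · have hqi : 0 < q i :=
          (hqsimp.1 i).lt_of_ne fun hz => hui (hsupp i hz.symm)
        have h1 : Filter.Tendsto (fun n => qn n i) Filter.atTop (nhds (q i)) :=
          tendsto_pi_nhds.mp hqt i
        have h2 : Filter.Tendsto (fun n => u i / qn n i) Filter.atTop (nhds (u i / q i)) :=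
          tendsto_const_nhds.div h1 (ne_of_gt hqi)
        have h3 : Filter.Tendsto (fun n => Real.log (u i / qn n i)) Filter.atTop
            (nhds (Real.log (u i / q i))) :=
          ((Real.continuousAt_log (div_ne_zero hui (ne_of_gt hqi))).tendsto).comp h2
        exact h3.const_mul _
    rw [KL, if_pos hsupp]
    refine ge_of_tendsto (EReal.tendsto_coe.mpr htend) ?_
    filter_upwards with n
    rw [← hKLn n]
    exact h _ (hqn n)
  · rw [KL, if_neg hsupp]
    exact le_top

end Stmt14Aux

open Stmt14Aux

set_option maxHeartbeats 3200000 in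
/-- if `v` maximizes `D_{M_{𝓕_α}}` over `Q^α_{p_α}`, `w` maximizes
`D_{M_{𝓕_β}}` over `Q^β_{p_β}`, and `p'` maximizes `D_{M_𝓕}` over `Q_p`, then
`D_{M_𝓕}(p') ≥ D_{M_{𝓕_α}}(v) + D_{M_{𝓕_β}}(w)`. -/
theorem stmt14 {m : ℕ} (d : Fin m → ℕ) (𝓕 : Finset (Finset (Fin m)))
    (hcov : ∀ i : Fin m, ∃ F ∈ 𝓕, i ∈ F)
    (α β : Finset (Fin m)) (hunion : α ∪ β = Finset.univ)
    (hsplit : ∀ F ∈ 𝓕, F ⊆ α ∨ F ⊆ β)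
    (hS1 : ∃ F ∈ 𝓕, α ∩ β ⊆ F ∧ F ⊆ α)
    (hS2 : ∃ F ∈ 𝓕, α ∩ β ⊆ F ∧ F ⊆ β)
    (p : (∀ i, Fin (d i)) → ℝ) (hp : p ∈ simplex (∀ i, Fin (d i)))
    (hpS : ∀ y, 0 < margF d (α ∩ β) p y)
    (v : ((i : {j // j ∈ α}) → Fin (d i.1)) → ℝ)
    (hv : v ∈ simplex ((i : {j // j ∈ α}) → Fin (d i.1)) ∧
      ∀ F ∈ 𝓕, F ⊆ α → margSub d α F v = margSub d α F (margF d α p))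
    (hvmax : ∀ v' : ((i : {j // j ∈ α}) → Fin (d i.1)) → ℝ,
      (v' ∈ simplex ((i : {j // j ∈ α}) → Fin (d i.1)) ∧
        ∀ F ∈ 𝓕, F ⊆ α → margSub d α F v' = margSub d α F (margF d α p)) →
      divFrom (closure (hierModelSub d α (𝓕.filter (· ⊆ α))
          (fun F hF => (Finset.mem_filter.mp hF).2))) v' ≤
        divFrom (closure (hierModelSub d α (𝓕.filter (· ⊆ α))
          (fun F hF => (Finset.mem_filter.mp hF).2))) v)
    (w : ((i : {j // j ∈ β}) → Fin (d i.1)) → ℝ)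
    (hw : w ∈ simplex ((i : {j // j ∈ β}) → Fin (d i.1)) ∧
      ∀ F ∈ 𝓕, F ⊆ β → margSub d β F w = margSub d β F (margF d β p))
    (hwmax : ∀ w' : ((i : {j // j ∈ β}) → Fin (d i.1)) → ℝ,
      (w' ∈ simplex ((i : {j // j ∈ β}) → Fin (d i.1)) ∧
        ∀ F ∈ 𝓕, F ⊆ β → margSub d β F w' = margSub d β F (margF d β p)) →
      divFrom (closure (hierModelSub d β (𝓕.filter (· ⊆ β))
          (fun F hF => (Finset.mem_filter.mp hF).2))) w' ≤
        divFrom (closure (hierModelSub d β (𝓕.filter (· ⊆ β))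
          (fun F hF => (Finset.mem_filter.mp hF).2))) w)
    (p' : (∀ i, Fin (d i)) → ℝ)
    (hp' : p' ∈ simplex (∀ i, Fin (d i)) ∧ ∀ F ∈ 𝓕, margF d F p' = margF d F p)
    (hp'max : ∀ u : (∀ i, Fin (d i)) → ℝ,
      (u ∈ simplex (∀ i, Fin (d i)) ∧ ∀ F ∈ 𝓕, margF d F u = margF d F p) →
      divFrom (closure (hierModel d 𝓕)) u ≤ divFrom (closure (hierModel d 𝓕)) p') :
    divFrom (closure (hierModelSub d α (𝓕.filter (· ⊆ α))
        (fun F hF => (Finset.mem_filter.mp hF).2))) v +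
      divFrom (closure (hierModelSub d β (𝓕.filter (· ⊆ β))
        (fun F hF => (Finset.mem_filter.mp hF).2))) w ≤
      divFrom (closure (hierModel d 𝓕)) p' := by
  classical
  obtain ⟨F₁, hF₁, hSF₁, hF₁α⟩ := hS1
  obtain ⟨F₂, hF₂, hSF₂, hF₂β⟩ := hS2
  rcases isEmpty_or_nonempty (∀ i, Fin (d i)) with hE | hNE
  · exact absurd hp.2 (by simp [Finset.univ_eq_empty])
  haveI := hNE
  haveI : ∀ i, Nonempty (Fin (d i)) := fun i =>
    ⟨(Classical.arbitrary (∀ j, Fin (d j))) i⟩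
  have hil : α ∩ β ⊆ α := Finset.inter_subset_left
  have hir : α ∩ β ⊆ β := Finset.inter_subset_right
  set Dα := divFrom (closure (hierModelSub d α (𝓕.filter (· ⊆ α))
      (fun F hF => (Finset.mem_filter.mp hF).2))) v with hDα
  set Dβ := divFrom (closure (hierModelSub d β (𝓕.filter (· ⊆ β))
      (fun F hF => (Finset.mem_filter.mp hF).2))) w with hDβ
  set pS := margF d (α ∩ β) p with hpSdef
  have hvS : margSub d α (α ∩ β) v = pS := by
    calc margSub d α (α ∩ β) v
        = margSub d F₁ (α ∩ β) (margSub d α F₁ v) := (margSub_margSub d hSF₁ hF₁α v).symm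
      _ = margSub d F₁ (α ∩ β) (margSub d α F₁ (margF d α p)) := by
          rw [hv.2 F₁ hF₁ hF₁α]
      _ = margSub d α (α ∩ β) (margF d α p) := margSub_margSub d hSF₁ hF₁α _
      _ = pS := margSub_margF d hil p
  have hwS : margSub d β (α ∩ β) w = pS := by
    calc margSub d β (α ∩ β) w
        = margSub d F₂ (α ∩ β) (margSub d β F₂ w) := (margSub_margSub d hSF₂ hF₂β w).symm
      _ = margSub d F₂ (α ∩ β) (margSub d β F₂ (margF d β p)) := by
          rw [hw.2 F₂ hF₂ hF₂β]
      _ = margSub d β (α ∩ β) (margF d β p) := margSub_margSub d hSF₂ hF₂β _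
      _ = pS := margSub_margF d hir p
  set f₀ : Cfg d α → ℝ := fun y => v y / pS (resSub d hil y) with hf₀
  set u₀ : (∀ i, Fin (d i)) → ℝ := fun x => f₀ (res d α x) * w (res d β x) with hu₀def
  have hfib : ∀ z : Cfg d β,
      (∑ y : Cfg d α, if resSub d hil y = resSub d hir z then f₀ y else 0) = 1 := by
    intro z
    have h1 : ∀ y : Cfg d α, (if resSub d hil y = resSub d hir z then f₀ y else 0)
        = (if resSub d hil y = resSub d hir z then v y else 0) / pS (resSub d hir z) := by
      intro y
      split_ifs with h
      · simp only [hf₀]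
        rw [h]
      · rw [zero_div]
    rw [Finset.sum_congr rfl fun y _ => h1 y, ← Finset.sum_div,
      sum_compat_left d α β hunion z v, hvS]
    exact div_self (ne_of_gt (hpS _))
  have hmargα : margF d α u₀ = v := by
    funext y
    rw [margF_eq]
    have h1 : ∀ x, (if res d α x = y then u₀ x else 0)
        = (fun y' => if y' = y then f₀ y' else 0) (res d α x) * w (res d β x) := by
      intro x
      by_cases h : res d α x = y
      · simp only [if_pos h]; rfl
      · simp only [if_neg h, zero_mul]
    rw [Finset.sum_congr rfl fun x _ => h1 x,
      sum_glue d α β hunion (fun y' => if y' = y then f₀ y' else 0) w]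
    have h2 : ∀ (y' : Cfg d α) (z : Cfg d β),
        (if resSub d (Finset.inter_subset_left) y' = resSub d (Finset.inter_subset_right) z
          then (if y' = y then f₀ y' else 0) * w z else 0)
        = if y' = y then (if resSub d (Finset.inter_subset_left) y'
            = resSub d (Finset.inter_subset_right) z then f₀ y' * w z else 0) else 0 := by
      intro y' z
      split_ifs <;> simp
    rw [Finset.sum_congr rfl fun y' _ => Finset.sum_congr rfl fun z _ => h2 y' z]
    have h3 : ∀ y' : Cfg d α,
        (∑ z : Cfg d β, if y' = y then (if resSub d (Finset.inter_subset_left) y'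
            = resSub d (Finset.inter_subset_right) z then f₀ y' * w z else 0) else 0)
        = if y' = y then (∑ z : Cfg d β, if resSub d (Finset.inter_subset_left) y'
            = resSub d (Finset.inter_subset_right) z then f₀ y' * w z else 0) else 0 := by
      intro y'
      split_ifs
      · rfl
      · exact Finset.sum_eq_zero fun z _ => rfl
    rw [Finset.sum_congr rfl fun y' _ => h3 y',
      Finset.sum_ite_eq' (Finset.univ) y
        (fun y' => ∑ z : Cfg d β, if resSub d (Finset.inter_subset_left) y'
          = resSub d (Finset.inter_subset_right) z then f₀ y' * w z else 0)]
    simp only [Finset.mem_univ, if_true]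
    have h4 : ∀ z : Cfg d β,
        (if resSub d (Finset.inter_subset_left) y = resSub d (Finset.inter_subset_right) z
          then f₀ y * w z else 0)
        = f₀ y * (if resSub d (Finset.inter_subset_left) y
            = resSub d (Finset.inter_subset_right) z then w z else 0) := by
      intro z
      split_ifs <;> simp
    rw [Finset.sum_congr rfl fun z _ => h4 z, ← Finset.mul_sum,
      sum_compat_right d α β hunion y w, hwS]
    simp only [hf₀]
    exact div_mul_cancel₀ _ (ne_of_gt (hpS _))
  have hmargβ : margF d β u₀ = w := by
    funext z
    rw [margF_eq]
    have h1 : ∀ x, (if res d β x = z then u₀ x else 0)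
        = f₀ (res d α x) * ((fun z' => if z' = z then w z' else 0) (res d β x)) := by
      intro x
      by_cases h : res d β x = z
      · simp only [if_pos h]; rfl
      · simp only [if_neg h, mul_zero]
    rw [Finset.sum_congr rfl fun x _ => h1 x,
      sum_glue d α β hunion f₀ (fun z' => if z' = z then w z' else 0), Finset.sum_comm]
    have h2 : ∀ (z' : Cfg d β) (y : Cfg d α),
        (if resSub d (Finset.inter_subset_left) y = resSub d (Finset.inter_subset_right) z'
          then f₀ y * (if z' = z then w z' else 0) else 0)
        = if z' = z then (if resSub d (Finset.inter_subset_left) y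
            = resSub d (Finset.inter_subset_right) z' then f₀ y * w z' else 0) else 0 := by
      intro z' y
      split_ifs <;> simp
    rw [Finset.sum_congr rfl fun z' _ => Finset.sum_congr rfl fun y _ => h2 z' y]
    have h3 : ∀ z' : Cfg d β,
        (∑ y : Cfg d α, if z' = z then (if resSub d (Finset.inter_subset_left) y
            = resSub d (Finset.inter_subset_right) z' then f₀ y * w z' else 0) else 0)
        = if z' = z then (∑ y : Cfg d α, if resSub d (Finset.inter_subset_left) y
            = resSub d (Finset.inter_subset_right) z' then f₀ y * w z' else 0) else 0 := by
      intro z'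
      split_ifs
      · rfl
      · exact Finset.sum_eq_zero fun y _ => rfl
    rw [Finset.sum_congr rfl fun z' _ => h3 z',
      Finset.sum_ite_eq' (Finset.univ) z
        (fun z' => ∑ y : Cfg d α, if resSub d (Finset.inter_subset_left) y
          = resSub d (Finset.inter_subset_right) z' then f₀ y * w z' else 0)]
    simp only [Finset.mem_univ, if_true]
    have h4 : ∀ y : Cfg d α,
        (if resSub d (Finset.inter_subset_left) y = resSub d (Finset.inter_subset_right) z
          then f₀ y * w z else 0)
        = (if resSub d (Finset.inter_subset_left) y
            = resSub d (Finset.inter_subset_right) z then f₀ y else 0) * w z := by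
      intro y
      split_ifs <;> simp
    rw [Finset.sum_congr rfl fun y _ => h4 y, ← Finset.sum_mul, hfib z, one_mul]
  have husum : ∑ x : ∀ i, Fin (d i), u₀ x = 1 := by
    have h := sum_margF d α u₀
    rw [hmargα] at h
    rw [← h]
    exact hv.1.2
  have hunn : ∀ x, 0 ≤ u₀ x := fun x =>
    mul_nonneg (div_nonneg (hv.1.1 _) (le_of_lt (hpS _))) (hw.1.1 _)
  have humarg : ∀ F ∈ 𝓕, margF d F u₀ = margF d F p := by
    intro F hF
    rcases hsplit F hF with hFα | hFβ
    · rw [← margSub_margF d hFα u₀, hmargα, hv.2 F hF hFα, margSub_margF d hFα p]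
    · rw [← margSub_margF d hFβ u₀, hmargβ, hw.2 F hF hFβ, margSub_margF d hFβ p]
  have hMpos : ∀ q ∈ hierModel d 𝓕, ∀ x, 0 < q x := by
    intro q hq x
    obtain ⟨_, θ, hθ, Z, hZ, hqe⟩ := hq
    rw [hqe]
    exact mul_pos (by positivity) (Finset.prod_pos fun F _ => hθ F _)
  have key : ∀ q ∈ hierModel d 𝓕, Dα + Dβ ≤ KL u₀ q := by
    intro q hq
    obtain ⟨hqsimp, θ, hθ, Z, hZ, hqe⟩ := hq
    set aa : Cfg d α → ℝ := fun y => ∏ F ∈ 𝓕,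
      if h : F ∈ 𝓕 ∧ F ⊆ α then θ ⟨F, h.1⟩ (fun i => y ⟨i.1, h.2 i.2⟩) else 1 with haa
    set bb0 : Cfg d β → ℝ := fun z => ∏ F ∈ 𝓕,
      if h : F ∈ 𝓕 ∧ ¬ F ⊆ α then
        θ ⟨F, h.1⟩ (fun i => z ⟨i.1, ((hsplit F h.1).resolve_left h.2) i.2⟩) else 1 with hbb0
    set bb : Cfg d β → ℝ := fun z => (1 / Z) * bb0 z with hbb
    have haa_pos : ∀ y, 0 < aa y := by
      intro y
      refine Finset.prod_pos fun F _ => ?_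
      by_cases h : F ∈ 𝓕 ∧ F ⊆ α
      · rw [dif_pos h]; exact hθ _ _
      · rw [dif_neg h]; norm_num
    have hbb0_pos : ∀ z, 0 < bb0 z := by
      intro z
      refine Finset.prod_pos fun F _ => ?_
      by_cases h : F ∈ 𝓕 ∧ ¬ F ⊆ α
      · rw [dif_pos h]; exact hθ _ _
      · rw [dif_neg h]; norm_num
    have hbb_pos : ∀ z, 0 < bb z := fun z => mul_pos (by positivity) (hbb0_pos z)
    have hq_ab : ∀ x, q x = aa (res d α x) * bb (res d β x) := by
      intro x
      rw [hqe x, prod_subtype_dite 𝓕 (fun F => θ F (fun i => x i.1))]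
      have hrhs : aa (res d α x) * bb (res d β x) = (1 / Z) * ∏ F ∈ 𝓕,
          ((if h : F ∈ 𝓕 ∧ F ⊆ α then θ ⟨F, h.1⟩ (fun i => (res d α x) ⟨i.1, h.2 i.2⟩) else 1)
            * (if h : F ∈ 𝓕 ∧ ¬ F ⊆ α then θ ⟨F, h.1⟩
                (fun i => (res d β x) ⟨i.1, ((hsplit F h.1).resolve_left h.2) i.2⟩) else 1)) := by
        rw [Finset.prod_mul_distrib]
        simp only [haa, hbb, hbb0]
        ring
      rw [hrhs]
      congr 1
      refine Finset.prod_congr rfl fun F hF => ?_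
      by_cases hFa : F ⊆ α
      · rw [dif_pos hF, dif_pos ⟨hF, hFa⟩, dif_neg (fun hc : F ∈ 𝓕 ∧ ¬ F ⊆ α => hc.2 hFa),
          mul_one]
        rfl
      · rw [dif_pos hF, dif_neg (fun hc : F ∈ 𝓕 ∧ F ⊆ α => hFa hc.2), dif_pos ⟨hF, hFa⟩,
          one_mul]
        rfl
    set AA : Cfg d (α ∩ β) → ℝ := margSub d α (α ∩ β) aa with hAA
    have hAA_pos : ∀ s, 0 < AA s := by
      intro s
      rw [hAA, margSub_eq d hil]
      refine Finset.sum_pos' (fun y _ => ?_) ?_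
      · split_ifs
        · exact le_of_lt (haa_pos y)
        · exact le_rfl
      · refine ⟨fun i => if h : i.1 ∈ α ∩ β then s ⟨i.1, h⟩ else Classical.arbitrary _,
          Finset.mem_univ _, ?_⟩
        split_ifs with h
        · exact haa_pos (fun i => if h : i.1 ∈ α ∩ β then s ⟨i.1, h⟩
            else Classical.arbitrary _)
        · exact absurd (funext fun i => dif_pos i.2) h
    set rα : Cfg d α → ℝ := fun y => aa y * (pS (resSub d hil y) / AA (resSub d hil y))
      with hrα
    set rβ : Cfg d β → ℝ := fun z => bb z * AA (resSub d hir z) with hrβ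
    have hrα_pos : ∀ y, 0 < rα y := fun y =>
      mul_pos (haa_pos y) (div_pos (hpS _) (hAA_pos _))
    have hrβ_pos : ∀ z, 0 < rβ z := fun z => mul_pos (hbb_pos z) (hAA_pos _)
    have hrα_sum : ∑ y : Cfg d α, rα y = 1 := by
      simp only [hrα]
      calc ∑ y : Cfg d α, aa y * (pS (resSub d hil y) / AA (resSub d hil y))
          = ∑ s : Cfg d (α ∩ β), margSub d α (α ∩ β) aa s * (pS s / AA s) :=
            sum_mul_resSub d hil aa (fun s => pS s / AA s)
        _ = ∑ s : Cfg d (α ∩ β), pS s := by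
            refine Finset.sum_congr rfl fun s _ => ?_
            rw [← hAA, mul_comm, div_mul_cancel₀ _ (ne_of_gt (hAA_pos s))]
        _ = 1 := by
            rw [hpSdef]
            exact (sum_margF d (α ∩ β) p).trans hp.2
    have hrβ_sum : ∑ z : Cfg d β, rβ z = 1 := by
      have h0 : ∑ x : ∀ i, Fin (d i), aa (res d α x) * bb (res d β x) = 1 := by
        rw [Finset.sum_congr rfl fun x _ => (hq_ab x).symm]
        exact hqsimp.2
      rw [sum_glue d α β hunion aa bb, Finset.sum_comm] at h0
      have h2 : ∀ z : Cfg d β, (∑ y : Cfg d α,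
          if resSub d (Finset.inter_subset_left) y = resSub d (Finset.inter_subset_right) z
            then aa y * bb z else 0) = AA (resSub d hir z) * bb z := by
        intro z
        have h3 : ∀ y : Cfg d α, (if resSub d (Finset.inter_subset_left) y
              = resSub d (Finset.inter_subset_right) z then aa y * bb z else 0)
            = (if resSub d (Finset.inter_subset_left) y
              = resSub d (Finset.inter_subset_right) z then aa y else 0) * bb z := by
          intro y; split_ifs <;> simp
        rw [Finset.sum_congr rfl fun y _ => h3 y, ← Finset.sum_mul,
          sum_compat_left d α β hunion z aa, ← hAA]
      rw [Finset.sum_congr rfl fun z _ => h2 z] at h0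
      rw [← h0]
      exact Finset.sum_congr rfl fun z _ => mul_comm _ _
    have hrα_mem : rα ∈ hierModelSub d α (𝓕.filter (· ⊆ α))
        (fun F hF => (Finset.mem_filter.mp hF).2) := by
      refine ⟨⟨fun y => le_of_lt (hrα_pos y), hrα_sum⟩,
        fun F yF => θ ⟨F.1, (Finset.mem_filter.mp F.2).1⟩ yF *
          (if h : F.1 = F₁ then pS (resSub d (h.symm ▸ hSF₁) yF)
            / AA (resSub d (h.symm ▸ hSF₁) yF) else 1), ?_, 1, one_pos, ?_⟩
      · intro F yF
        refine mul_pos (hθ _ _) ?_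
        by_cases h : F.1 = F₁
        · rw [dif_pos h]; exact div_pos (hpS _) (hAA_pos _)
        · rw [dif_neg h]; norm_num
      · intro ya
        rw [Finset.prod_mul_distrib]
        have hA : (∏ F : {F // F ∈ 𝓕.filter (· ⊆ α)},
            θ ⟨F.1, (Finset.mem_filter.mp F.2).1⟩
              (fun i => ya ⟨i.1, (Finset.mem_filter.mp F.2).2 i.2⟩)) = aa ya := by
          rw [prod_subtype_dite (𝓕.filter (· ⊆ α))
            (fun F => θ ⟨F.1, (Finset.mem_filter.mp F.2).1⟩
              (fun i => ya ⟨i.1, (Finset.mem_filter.mp F.2).2 i.2⟩))]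
          refine Eq.trans (Finset.prod_subset (Finset.filter_subset (· ⊆ α) 𝓕)
            (fun F _ hnF => dif_neg hnF)) ?_
          refine Finset.prod_congr rfl fun F hF => ?_
          by_cases hFa : F ⊆ α
          · have e1 : F ∈ 𝓕.filter (· ⊆ α) := Finset.mem_filter.mpr ⟨hF, hFa⟩
            have e2 : F ∈ 𝓕 ∧ F ⊆ α := ⟨hF, hFa⟩
            rw [dif_pos e1, dif_pos e2]
          · have e1 : F ∉ 𝓕.filter (· ⊆ α) := fun hc => hFa (Finset.mem_filter.mp hc).2
            have e2 : ¬ (F ∈ 𝓕 ∧ F ⊆ α) := fun hc => hFa hc.2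
            rw [dif_neg e1, dif_neg e2]
        have hB : (∏ F : {F // F ∈ 𝓕.filter (· ⊆ α)},
            if h : F.1 = F₁ then
              pS (resSub d (h.symm ▸ hSF₁) (fun i => ya ⟨i.1, (Finset.mem_filter.mp F.2).2 i.2⟩))
              / AA (resSub d (h.symm ▸ hSF₁) (fun i => ya ⟨i.1, (Finset.mem_filter.mp F.2).2 i.2⟩))
            else 1)
            = pS (resSub d hil ya) / AA (resSub d hil ya) := by
          rw [Fintype.prod_eq_single (⟨F₁, Finset.mem_filter.mpr ⟨hF₁, hF₁α⟩⟩ :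
            {F // F ∈ 𝓕.filter (· ⊆ α)}) (fun F hF => dif_neg (fun hc => hF (Subtype.ext hc))),
            dif_pos rfl]
          rfl
        rw [hA, hB, hrα]
        norm_num
    have hrβ_mem : rβ ∈ hierModelSub d β (𝓕.filter (· ⊆ β))
        (fun F hF => (Finset.mem_filter.mp hF).2) := by
      refine ⟨⟨fun z => le_of_lt (hrβ_pos z), hrβ_sum⟩,
        fun F zF => (if h : ¬ F.1 ⊆ α then θ ⟨F.1, (Finset.mem_filter.mp F.2).1⟩ zF else 1) *
          (if h : F.1 = F₂ then AA (resSub d (h.symm ▸ hSF₂) zF) else 1), ?_, Z, hZ, ?_⟩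
      · intro F zF
        refine mul_pos ?_ ?_
        · by_cases h : ¬ F.1 ⊆ α
          · rw [dif_pos h]; exact hθ _ _
          · rw [dif_neg h]; norm_num
        · by_cases h : F.1 = F₂
          · rw [dif_pos h]; exact hAA_pos _
          · rw [dif_neg h]; norm_num
      · intro za
        rw [Finset.prod_mul_distrib]
        have hA : (∏ F : {F // F ∈ 𝓕.filter (· ⊆ β)},
            if h : ¬ F.1 ⊆ α then θ ⟨F.1, (Finset.mem_filter.mp F.2).1⟩
              (fun i => za ⟨i.1, (Finset.mem_filter.mp F.2).2 i.2⟩) else 1) = bb0 za := by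
          rw [prod_subtype_dite (𝓕.filter (· ⊆ β))
            (fun F => if h : ¬ F.1 ⊆ α then θ ⟨F.1, (Finset.mem_filter.mp F.2).1⟩
              (fun i => za ⟨i.1, (Finset.mem_filter.mp F.2).2 i.2⟩) else 1)]
          refine Eq.trans (Finset.prod_subset (Finset.filter_subset (· ⊆ β) 𝓕)
            (fun F _ hnF => dif_neg hnF)) ?_
          refine Finset.prod_congr rfl fun F hF => ?_
          by_cases hFa : F ⊆ α
          · have e1 : ¬ (F ∈ 𝓕 ∧ ¬ F ⊆ α) := fun hc => hc.2 hFa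
            rw [dif_neg e1]
            by_cases hFb : F ∈ 𝓕.filter (· ⊆ β)
            · have e2 : ¬ ¬ F ⊆ α := not_not_intro hFa
              rw [dif_pos hFb, dif_neg e2]
            · rw [dif_neg hFb]
          · have hFb : F ∈ 𝓕.filter (· ⊆ β) :=
              Finset.mem_filter.mpr ⟨hF, (hsplit F hF).resolve_left hFa⟩
            have e2 : F ∈ 𝓕 ∧ ¬ F ⊆ α := ⟨hF, hFa⟩
            rw [dif_pos hFb, dif_pos hFa, dif_pos e2]
        have hB : (∏ F : {F // F ∈ 𝓕.filter (· ⊆ β)},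
            if h : F.1 = F₂ then
              AA (resSub d (h.symm ▸ hSF₂) (fun i => za ⟨i.1, (Finset.mem_filter.mp F.2).2 i.2⟩))
            else 1) = AA (resSub d hir za) := by
          rw [Fintype.prod_eq_single (⟨F₂, Finset.mem_filter.mpr ⟨hF₂, hF₂β⟩⟩ :
            {F // F ∈ 𝓕.filter (· ⊆ β)}) (fun F hF => dif_neg (fun hc => hF (Subtype.ext hc))),
            dif_pos rfl]
          rfl
        rw [hA, hB, hrβ, hbb]
        ring
    have hqpos : ∀ x, 0 < q x := by
      intro x
      rw [hqe x]
      exact mul_pos (by positivity) (Finset.prod_pos fun F _ => hθ F _)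
    set Lα : Cfg d α → ℝ := fun y => Real.log (v y / rα y) with hLα
    set Lβ : Cfg d β → ℝ := fun z => Real.log (w z / rβ z) with hLβ
    have hpoint : ∀ x, u₀ x * Real.log (u₀ x / q x)
        = u₀ x * Lα (res d α x) + u₀ x * Lβ (res d β x) := by
      intro x
      rcases eq_or_lt_of_le (hv.1.1 (res d α x)) with hv0 | hv0
      · have h0 : u₀ x = 0 := by
          simp only [hu₀def, hf₀]
          rw [← hv0, zero_div, zero_mul]
        rw [h0]; ring
      rcases eq_or_lt_of_le (hw.1.1 (res d β x)) with hw0 | hw0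
      · have h0 : u₀ x = 0 := by
          simp only [hu₀def]
          rw [← hw0, mul_zero]
        rw [h0]; ring
      have hratio : u₀ x / q x
          = (v (res d α x) / rα (res d α x)) * (w (res d β x) / rβ (res d β x)) := by
        rw [hq_ab x]
        simp only [hu₀def, hf₀, hrα, hrβ, hbb]
        rw [show resSub d hir (res d β x) = resSub d hil (res d α x) from rfl]
        have h1 := ne_of_gt (hpS (resSub d hil (res d α x)))
        have h2 := ne_of_gt (hAA_pos (resSub d hil (res d α x)))
        have h3 := ne_of_gt (haa_pos (res d α x))
        have h4 := ne_of_gt (hbb0_pos (res d β x))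
        have h5 := ne_of_gt hZ
        field_simp
      rw [hratio, Real.log_mul (ne_of_gt (div_pos hv0 (hrα_pos _)))
        (ne_of_gt (div_pos hw0 (hrβ_pos _))), hLα, hLβ, mul_add]
    have hS1sum : ∑ x : ∀ i, Fin (d i), u₀ x * Lα (res d α x)
        = ∑ y : Cfg d α, v y * Lα y := by
      have e1 : ∀ x, u₀ x * Lα (res d α x)
          = (fun y => f₀ y * Lα y) (res d α x) * w (res d β x) := by
        intro x
        simp only [hu₀def]
        ring
      rw [Finset.sum_congr rfl fun x _ => e1 x,
        sum_glue d α β hunion (fun y => f₀ y * Lα y) w]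
      refine Finset.sum_congr rfl fun y _ => ?_
      have h4 : ∀ z : Cfg d β, (if resSub d (Finset.inter_subset_left) y
            = resSub d (Finset.inter_subset_right) z then (f₀ y * Lα y) * w z else 0)
          = (f₀ y * Lα y) * (if resSub d (Finset.inter_subset_left) y
            = resSub d (Finset.inter_subset_right) z then w z else 0) := by
        intro z; split_ifs <;> simp
      rw [Finset.sum_congr rfl fun z _ => h4 z, ← Finset.mul_sum,
        sum_compat_right d α β hunion y w, hwS]
      have h5 : f₀ y * pS (resSub d hil y) = v y := by
        simp only [hf₀]
        exact div_mul_cancel₀ _ (ne_of_gt (hpS _))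
      calc f₀ y * Lα y * pS (resSub d hil y) = f₀ y * pS (resSub d hil y) * Lα y := by ring
        _ = v y * Lα y := by rw [h5]
    have hS2sum : ∑ x : ∀ i, Fin (d i), u₀ x * Lβ (res d β x)
        = ∑ z : Cfg d β, w z * Lβ z := by
      have e1 : ∀ x, u₀ x * Lβ (res d β x)
          = f₀ (res d α x) * ((fun z => w z * Lβ z) (res d β x)) := by
        intro x
        simp only [hu₀def]
        ring
      rw [Finset.sum_congr rfl fun x _ => e1 x,
        sum_glue d α β hunion f₀ (fun z => w z * Lβ z), Finset.sum_comm]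
      refine Finset.sum_congr rfl fun z _ => ?_
      have h4 : ∀ y : Cfg d α, (if resSub d (Finset.inter_subset_left) y
            = resSub d (Finset.inter_subset_right) z then f₀ y * (w z * Lβ z) else 0)
          = (if resSub d (Finset.inter_subset_left) y
            = resSub d (Finset.inter_subset_right) z then f₀ y else 0) * (w z * Lβ z) := by
        intro y; split_ifs <;> simp
      rw [Finset.sum_congr rfl fun y _ => h4 y, ← Finset.sum_mul, hfib z, one_mul]
    have hKLuq : KL u₀ q
        = (((∑ y : Cfg d α, v y * Lα y) + ∑ z : Cfg d β, w z * Lβ z : ℝ) : EReal) := by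
      rw [KL, if_pos (fun x hx => absurd hx (ne_of_gt (hqpos x)))]
      congr 1
      rw [Finset.sum_congr rfl fun x _ => hpoint x, Finset.sum_add_distrib, hS1sum, hS2sum]
    have hKLva : KL v rα = ((∑ y : Cfg d α, v y * Lα y : ℝ) : EReal) := by
      rw [KL, if_pos (fun y hy => absurd hy (ne_of_gt (hrα_pos y)))]
    have hKLwb : KL w rβ = ((∑ z : Cfg d β, w z * Lβ z : ℝ) : EReal) := by
      rw [KL, if_pos (fun z hz => absurd hz (ne_of_gt (hrβ_pos z)))]
    have hDα_le : Dα ≤ KL v rα := by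
      rw [hDα]
      exact iInf₂_le rα (subset_closure hrα_mem)
    have hDβ_le : Dβ ≤ KL w rβ := by
      rw [hDβ]
      exact iInf₂_le rβ (subset_closure hrβ_mem)
    calc Dα + Dβ ≤ KL v rα + KL w rβ := add_le_add hDα_le hDβ_le
      _ = KL u₀ q := by rw [hKLva, hKLwb, hKLuq, ← EReal.coe_add]
  have hclos := closure_KL_bound (hierModel d 𝓕) (fun q hq => hq.1) hMpos u₀ (Dα + Dβ) key
  have h1 : Dα + Dβ ≤ divFrom (closure (hierModel d 𝓕)) u₀ :=
    le_iInf fun q => le_iInf fun hq => hclos q hq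
  exact h1.trans (hp'max u₀ ⟨⟨hunn, husum⟩, humarg⟩)
end

section
/- Let (α, S, β) be a reducible decomposition of the facet family 𝓕. Suppose p ∈ Δ_R attains the maximum divergence, i.e., D_{M_𝓕}(p) = D(M_𝓕) := sup_{u∈Δ_R} D_{M_𝓕}(u), and that the S-marginal p_S is strictly positive. If Q^α_{p_α} contains a point attaining D(M_{𝓕_α}) = sup_{u∈Δ_{R_α}} D_{M_{𝓕_α}}(u) and Q^β_{p_β} contains a point attaining D(M_{𝓕_β}), then D(M_𝓕) ≥ D(M_{𝓕_α}) + D(M_{𝓕_β}). -/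
open scoped BigOperators Pointwise

attribute [local instance] Classical.propDecidable

namespace Stmt15

open Finset

variable {m : ℕ} (d : Fin m → ℕ)

abbrev Xsp := ∀ i, Fin (d i)
abbrev Psp (γ : Finset (Fin m)) := (i : {j // j ∈ γ}) → Fin (d i.1)

def resTo (γ : Finset (Fin m)) (x : Xsp d) : Psp d γ := fun i => x i.1

def resSub {γ F : Finset (Fin m)} (h : F ⊆ γ) (y : Psp d γ) : Psp d F :=
  fun i => y ⟨i.1, h i.2⟩

lemma margF_eq (F : Finset (Fin m)) (p : Xsp d → ℝ) (y : Psp d F) :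
    margF d F p y = ∑ x, if resTo d F x = y then p x else 0 := by
  unfold margF
  refine Finset.sum_congr rfl fun x _ => if_congr ?_ rfl rfl
  constructor
  · intro h; funext i; exact h i
  · intro h i; exact congrFun h i

lemma margSub_eq {γ F : Finset (Fin m)} (h : F ⊆ γ)
    (u : Psp d γ → ℝ) (y : Psp d F) :
    margSub d γ F u y = ∑ xa, if resSub d h xa = y then u xa else 0 := by
  unfold margSub
  refine Finset.sum_congr rfl fun xa _ => if_congr ?_ rfl rfl
  constructor
  · intro hc; funext i; exact hc i.1 i.2 (h i.2)
  · intro hc i hiF hia; exact congrFun hc ⟨i, hiF⟩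

section helpers

variable {A B C : Type*} [Fintype A] [Fintype C] {f : A → B} {g : C → A}

/-- generic collapse lemma -/
lemma sum_ite_comp (dA : DecidableEq A) (dB : DecidableEq B) (u : C → ℝ) (b : B) :
    (∑ a, @ite ℝ (f a = b) (dB _ _) (∑ c, @ite ℝ (g c = a) (dA _ _) (u c) 0) 0)
      = ∑ c, @ite ℝ (f (g c) = b) (dB _ _) (u c) 0 := by
  letI := dA; letI := dB
  have h1 : ∀ a, (if f a = b then (∑ c, if g c = a then u c else 0) else 0)
      = ∑ c, if g c = a then (if f a = b then u c else 0) else 0 := by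
    intro a; by_cases h : f a = b <;> simp [h]
  rw [Finset.sum_congr rfl fun a _ => h1 a, Finset.sum_comm]
  refine Finset.sum_congr rfl fun c _ => ?_
  simp

/-- generic weighted collapse -/
lemma sum_mul_comp (dA : DecidableEq A) (u : C → ℝ) (t : A → ℝ) :
    (∑ a, (∑ c, @ite ℝ (g c = a) (dA _ _) (u c) 0) * t a) = ∑ c, u c * t (g c) := by
  letI := dA
  have h1 : ∀ a, (∑ c, if g c = a then u c else 0) * t a
      = ∑ c, if g c = a then u c * t a else 0 := by
    intro a; rw [Finset.sum_mul]; exact Finset.sum_congr rfl fun c _ => by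
      by_cases h : g c = a <;> simp [h]
  rw [Finset.sum_congr rfl fun a _ => h1 a, Finset.sum_comm]
  refine Finset.sum_congr rfl fun c _ => ?_
  simp

end helpers

lemma sum_margF_mul (F : Finset (Fin m)) (p : Xsp d → ℝ) (t : Psp d F → ℝ) :
    (∑ y, margF d F p y * t y) = ∑ x, p x * t (resTo d F x) := by
  simp only [margF_eq]
  rw [sum_mul_comp (g := resTo d F) _ p t]

lemma sum_margF (F : Finset (Fin m)) (p : Xsp d → ℝ) :
    (∑ y, margF d F p y) = ∑ x, p x := by
  have := sum_margF_mul d F p (fun _ => 1)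
  simpa using this

lemma sum_margSub_mul {γ F : Finset (Fin m)} (h : F ⊆ γ) (u : Psp d γ → ℝ)
    (t : Psp d F → ℝ) :
    (∑ y, margSub d γ F u y * t y) = ∑ xa, u xa * t (resSub d h xa) := by
  simp only [margSub_eq d h]
  rw [sum_mul_comp (g := resSub d h) _ u t]

lemma resSub_resTo {γ F : Finset (Fin m)} (h : F ⊆ γ) (x : Xsp d) :
    resSub d h (resTo d γ x) = resTo d F x := rfl

lemma resSub_resSub {γ F F' : Finset (Fin m)} (h1 : F' ⊆ F) (h2 : F ⊆ γ) (y : Psp d γ) :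
    resSub d h1 (resSub d h2 y) = resSub d (h1.trans h2) y := rfl

/-- marginal of marginal -/
lemma margSub_margF {γ F : Finset (Fin m)} (h : F ⊆ γ) (p : Xsp d → ℝ) :
    margSub d γ F (margF d γ p) = margF d F p := by
  funext y
  rw [margSub_eq d h]
  simp only [margF_eq]
  rw [sum_ite_comp (f := resSub d h) (g := resTo d γ) _ _ p y]
  exact Finset.sum_congr rfl fun x _ => if_congr Iff.rfl rfl rfl

/-- tower property for margSub -/
lemma margSub_tower {γ F F' : Finset (Fin m)} (h1 : F' ⊆ F) (h2 : F ⊆ γ)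
    (u : Psp d γ → ℝ) (y' : Psp d F') :
    margSub d γ F' u y' = ∑ yF, if resSub d h1 yF = y' then margSub d γ F u yF else 0 := by
  simp only [margSub_eq d h2, margSub_eq d (h1.trans h2)]
  simp only [← resSub_resSub d h1 h2]
  exact (sum_ite_comp (f := resSub d h1) (g := resSub d h2) _ _ u y').symm

end Stmt15
namespace Stmt15

open Finset

variable {m : ℕ} (d : Fin m → ℕ)

section Glue

variable {γ δ : Finset (Fin m)}

lemma mem_delta (hu : γ ∪ δ = Finset.univ) {i : Fin m} (h : i ∉ γ) : i ∈ δ := by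
  have : i ∈ γ ∪ δ := by rw [hu]; exact Finset.mem_univ i
  exact (Finset.mem_union.mp this).resolve_left h

def glue (hu : γ ∪ δ = Finset.univ) (y : Psp d γ) (z : Psp d δ) : Xsp d :=
  fun i => if h : i ∈ γ then y ⟨i, h⟩ else z ⟨i, mem_delta hu h⟩

def compat (y : Psp d γ) (z : Psp d δ) : Prop :=
  resSub d Finset.inter_subset_left y = resSub d Finset.inter_subset_right z

variable (hu : γ ∪ δ = Finset.univ)

lemma resTo_glue_left (y : Psp d γ) (z : Psp d δ) :
    resTo d γ (glue d hu y z) = y := by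
  funext i; exact dif_pos i.2

lemma resTo_glue_right {y : Psp d γ} {z : Psp d δ} (hc : compat d y z) :
    resTo d δ (glue d hu y z) = z := by
  funext i
  by_cases h : i.1 ∈ γ
  · exact (dif_pos h).trans (congrFun hc ⟨i.1, Finset.mem_inter.mpr ⟨h, i.2⟩⟩)
  · exact dif_neg h

lemma glue_resTo (x : Xsp d) : glue d hu (resTo d γ x) (resTo d δ x) = x := by
  funext i
  by_cases h : i ∈ γ
  · exact dif_pos h
  · exact dif_neg h

lemma compat_resTo (x : Xsp d) : compat d (resTo d γ x) (resTo d δ x) := rfl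

lemma resTo_inter_glue (y : Psp d γ) (z : Psp d δ) :
    resTo d (γ ∩ δ) (glue d hu y z) = resSub d Finset.inter_subset_left y := by
  funext i; exact dif_pos (Finset.mem_inter.mp i.2).1

lemma sum_glue (f : Xsp d → ℝ) :
    ∑ x, f x = ∑ y : Psp d γ, ∑ z : Psp d δ,
      if compat d y z then f (glue d hu y z) else 0 := by
  rw [← Finset.sum_product', ← Finset.sum_filter]
  refine Finset.sum_nbij' (fun x => (resTo d γ x, resTo d δ x))
    (fun p => glue d hu p.1 p.2) ?_ ?_ ?_ ?_ ?_
  · intro x _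
    exact Finset.mem_filter.mpr ⟨Finset.mem_univ _, compat_resTo d x⟩
  · intro p _; exact Finset.mem_univ _
  · intro x _; exact glue_resTo d hu x
  · intro p hp
    have hc : compat d p.1 p.2 := (Finset.mem_filter.mp hp).2
    exact Prod.ext (resTo_glue_left d hu _ _) (resTo_glue_right d hu hc)
  · intro x _; rw [glue_resTo d hu x]

lemma margF_glue (r : Xsp d → ℝ) (y : Psp d γ) :
    margF d γ r y = ∑ z : Psp d δ, if compat d y z then r (glue d hu y z) else 0 := by
  rw [margF_eq]
  rw [sum_glue d hu (fun x => if resTo d γ x = y then r x else 0)]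
  simp only [resTo_glue_left d hu]
  have h2 : ∀ (y' : Psp d γ) (z : Psp d δ),
      (if compat d y' z then (if y' = y then r (glue d hu y' z) else 0) else 0)
      = if y' = y then (if compat d y' z then r (glue d hu y' z) else 0) else 0 := by
    intro y' z; by_cases h : compat d y' z <;> by_cases h' : y' = y <;> simp [h, h']
  rw [Finset.sum_congr rfl fun y' _ => Finset.sum_congr rfl fun z _ => h2 y' z,
    Finset.sum_comm]
  refine Finset.sum_congr rfl fun z _ => ?_
  rw [Finset.sum_ite_eq' Finset.univ y
    (fun y' => if compat d y' z then r (glue d hu y' z) else 0)]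
  simp

lemma margF_glue_right (r : Xsp d → ℝ) (z : Psp d δ) :
    margF d δ r z = ∑ y : Psp d γ, if compat d y z then r (glue d hu y z) else 0 := by
  rw [margF_eq, sum_glue d hu (fun x => if resTo d δ x = z then r x else 0)]
  have h2 : ∀ (y : Psp d γ) (z' : Psp d δ),
      (if compat d y z' then
        (if resTo d δ (glue d hu y z') = z then r (glue d hu y z') else 0) else 0)
      = if z' = z then (if compat d y z' then r (glue d hu y z') else 0) else 0 := by
    intro y z'
    by_cases hc : compat d y z'
    · rw [if_pos hc, resTo_glue_right d hu hc]
      by_cases h' : z' = z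
      · subst h'; simp [hc]
      · simp [h']
    · rw [if_neg hc]
      by_cases h' : z' = z
      · subst h'; simp [hc]
      · simp [h']
  rw [Finset.sum_congr rfl fun y _ => Finset.sum_congr rfl fun z' _ => h2 y z']
  refine Finset.sum_congr rfl fun y _ => ?_
  rw [Finset.sum_ite_eq' Finset.univ z
    (fun z' => if compat d y z' then r (glue d hu y z') else 0)]
  simp

lemma exists_ext (x₀ : Xsp d) (s : Psp d (γ ∩ δ)) :
    ∃ z : Psp d δ, resSub d Finset.inter_subset_right z = s := by
  refine ⟨fun i => if h : i.1 ∈ γ then ?_ else x₀ i.1, ?_⟩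
  · exact s ⟨i.1, Finset.mem_inter.mpr ⟨h, i.2⟩⟩
  · funext j
    exact dif_pos (Finset.mem_inter.mp j.2).1

end Glue

lemma exists_pos_of_sum_pos {C : Type*} [Fintype C] {h : C → ℝ} (hp : 0 < ∑ c, h c) :
    ∃ c, 0 < h c := by
  by_contra hc
  push_neg at hc
  have : ∑ c, h c ≤ 0 := Finset.sum_nonpos fun c _ => hc c
  linarith

end Stmt15
namespace Stmt15

open Finset

variable {m : ℕ} (d : Fin m → ℕ)

lemma isClosed_simplex (ι : Type*) [Fintype ι] : IsClosed (simplex ι) := by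
  have h1 : IsClosed {p : ι → ℝ | ∀ i, 0 ≤ p i} := by
    have he : {p : ι → ℝ | ∀ i, 0 ≤ p i} = ⋂ i, {p | 0 ≤ p i} := by
      ext p; simp [Set.mem_iInter]
    rw [he]
    exact isClosed_iInter fun i => isClosed_le continuous_const (continuous_apply i)
  have h2 : IsClosed {p : ι → ℝ | ∑ i, p i = 1} :=
    isClosed_eq (continuous_finset_sum _ fun i _ => continuous_apply i) continuous_const
  exact h1.inter h2

lemma closure_hierModel_subset_simplex (𝓕 : Finset (Finset (Fin m))) :
    closure (hierModel d 𝓕) ⊆ simplex (Xsp d) :=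
  closure_minimal (fun p hp => hp.1) (isClosed_simplex _)

lemma closure_hierModelSub_subset_simplex (γ : Finset (Fin m))
    (𝓕' : Finset (Finset (Fin m))) (h : ∀ F ∈ 𝓕', F ⊆ γ) :
    closure (hierModelSub d γ 𝓕' h) ⊆ simplex (Psp d γ) :=
  closure_minimal (fun p hp => hp.1) (isClosed_simplex _)

lemma hierModel_pos {𝓕 : Finset (Finset (Fin m))} {r : Xsp d → ℝ}
    (hr : r ∈ hierModel d 𝓕) : ∀ x, 0 < r x := by
  obtain ⟨-, θ, hθ, Z, hZ, hform⟩ := hr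
  intro x
  rw [hform x]
  exact mul_pos (one_div_pos.mpr hZ) (Finset.prod_pos fun F _ => hθ F _)

section Factor

variable {γ δ : Finset (Fin m)} (hu : γ ∪ δ = Finset.univ)

lemma hierModel_factor {𝓕 : Finset (Finset (Fin m))}
    (hsp : ∀ F ∈ 𝓕, F ⊆ γ ∨ F ⊆ δ) {r : Xsp d → ℝ} (hr : r ∈ hierModel d 𝓕) :
    ∃ A : Psp d γ → ℝ, ∃ B : Psp d δ → ℝ, (∀ y, 0 < A y) ∧ (∀ z, 0 < B z) ∧
      ∀ x, r x = A (resTo d γ x) * B (resTo d δ x) := by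
  obtain ⟨-, θ, hθ, Z, hZ, hform⟩ := hr
  refine ⟨fun y => (1/Z) * ∏ F : {F // F ∈ 𝓕},
      (if h : F.1 ⊆ γ then θ F (fun i => y ⟨i.1, h i.2⟩) else 1),
    fun z => ∏ F : {F // F ∈ 𝓕},
      (if h : F.1 ⊆ γ then 1
        else θ F (fun i => z ⟨i.1, ((hsp F.1 F.2).resolve_left h) i.2⟩)), ?_, ?_, ?_⟩
  · intro y
    refine mul_pos (one_div_pos.mpr hZ) (Finset.prod_pos fun F _ => ?_)
    by_cases h : F.1 ⊆ γ
    · rw [dif_pos h]; exact hθ F _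
    · rw [dif_neg h]; exact one_pos
  · intro z
    refine Finset.prod_pos fun F _ => ?_
    by_cases h : F.1 ⊆ γ
    · rw [dif_pos h]; exact one_pos
    · rw [dif_neg h]; exact hθ F _
  · intro x
    rw [hform x, mul_assoc, ← Finset.prod_mul_distrib]
    congr 1
    refine Finset.prod_congr rfl fun F _ => ?_
    by_cases h : F.1 ⊆ γ
    · rw [dif_pos h, dif_pos h, mul_one]; rfl
    · rw [dif_neg h, dif_neg h, one_mul]; rfl

def Cset : Set (Xsp d → ℝ) :=
  {q | ∀ (y y' : Psp d γ) (z z' : Psp d δ), compat d y z → compat d y z' →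
    compat d y' z → compat d y' z' →
    q (glue d hu y z) * q (glue d hu y' z') = q (glue d hu y z') * q (glue d hu y' z)}

lemma isClosed_Cset : IsClosed (Cset d hu) := by
  have he : Cset d hu = ⋂ (y : Psp d γ), ⋂ (y' : Psp d γ), ⋂ (z : Psp d δ),
      ⋂ (z' : Psp d δ), ⋂ (_ : compat d y z), ⋂ (_ : compat d y z'),
      ⋂ (_ : compat d y' z), ⋂ (_ : compat d y' z'),
      {q : Xsp d → ℝ | q (glue d hu y z) * q (glue d hu y' z')
        = q (glue d hu y z') * q (glue d hu y' z)} := by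
    ext q; simp [Cset, Set.mem_iInter]
  rw [he]
  exact isClosed_iInter fun y => isClosed_iInter fun y' => isClosed_iInter fun z =>
    isClosed_iInter fun z' => isClosed_iInter fun _ => isClosed_iInter fun _ =>
    isClosed_iInter fun _ => isClosed_iInter fun _ =>
    isClosed_eq
      (Continuous.mul (continuous_apply (glue d hu y z)) (continuous_apply (glue d hu y' z')))
      (Continuous.mul (continuous_apply (glue d hu y z')) (continuous_apply (glue d hu y' z)))

lemma closure_hierModel_subset_Cset {𝓕 : Finset (Finset (Fin m))}
    (hsp : ∀ F ∈ 𝓕, F ⊆ γ ∨ F ⊆ δ) :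
    closure (hierModel d 𝓕) ⊆ Cset d hu := by
  refine closure_minimal ?_ (isClosed_Cset d hu)
  intro r hr
  obtain ⟨A, B, -, -, hAB⟩ := hierModel_factor d hsp hr
  intro y y' z z' c1 c2 c3 c4
  rw [hAB, hAB, hAB, hAB,
    resTo_glue_left d hu, resTo_glue_left d hu, resTo_glue_left d hu, resTo_glue_left d hu,
    resTo_glue_right d hu c1, resTo_glue_right d hu c2, resTo_glue_right d hu c3,
    resTo_glue_right d hu c4]
  ring

lemma exists_extL (x₀ : Xsp d) (s : Psp d (γ ∩ δ)) :
    ∃ y : Psp d γ, resSub d Finset.inter_subset_left y = s := by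
  refine ⟨fun i => if h : i.1 ∈ δ then ?_ else x₀ i.1, ?_⟩
  · exact s ⟨i.1, Finset.mem_inter.mpr ⟨i.2, h⟩⟩
  · funext j
    exact dif_pos (Finset.mem_inter.mp j.2).2

lemma exists_factor (x₀ : Xsp d) {q : Xsp d → ℝ} (h0 : ∀ x, 0 ≤ q x)
    (hq : q ∈ Cset d hu) :
    ∃ A : Psp d γ → ℝ, ∃ B : Psp d δ → ℝ, (∀ y, 0 ≤ A y) ∧ (∀ z, 0 ≤ B z) ∧
      ∀ x, q x = A (resTo d γ x) * B (resTo d δ x) := by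
  classical
  set P : Psp d (γ ∩ δ) → Prop := fun s => ∃ y z,
    resSub d Finset.inter_subset_left y = s ∧ resSub d Finset.inter_subset_right z = s ∧
      0 < q (glue d hu y z) with hP
  set c : Psp d (γ ∩ δ) → Psp d γ × Psp d δ := fun s =>
    if h : P s then (h.choose, h.choose_spec.choose)
    else ((exists_extL d x₀ s).choose, (exists_ext d x₀ s).choose) with hcdef
  have hc1 : ∀ s, resSub d Finset.inter_subset_left (c s).1 = s := by
    intro s
    by_cases h : P s
    · simp only [hcdef, dif_pos h]
      exact h.choose_spec.choose_spec.1
    · simp only [hcdef, dif_neg h]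
      exact (exists_extL d x₀ s).choose_spec
  have hc2 : ∀ s, resSub d Finset.inter_subset_right (c s).2 = s := by
    intro s
    by_cases h : P s
    · simp only [hcdef, dif_pos h]
      exact h.choose_spec.choose_spec.2.1
    · simp only [hcdef, dif_neg h]
      exact (exists_ext d x₀ s).choose_spec
  have hc3 : ∀ s, P s → 0 < q (glue d hu (c s).1 (c s).2) := by
    intro s h
    simp only [hcdef, dif_pos h]
    exact h.choose_spec.choose_spec.2.2
  have hc4 : ∀ s, ¬ P s → q (glue d hu (c s).1 (c s).2) = 0 := by
    intro s h
    by_contra hne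
    exact h ⟨(c s).1, (c s).2, hc1 s, hc2 s,
      lt_of_le_of_ne (h0 _) (Ne.symm hne)⟩
  refine ⟨fun y => q (glue d hu y (c (resSub d Finset.inter_subset_left y)).2),
    fun z => if q (glue d hu (c (resSub d Finset.inter_subset_right z)).1
        (c (resSub d Finset.inter_subset_right z)).2) = 0 then 0
      else q (glue d hu (c (resSub d Finset.inter_subset_right z)).1 z) /
        q (glue d hu (c (resSub d Finset.inter_subset_right z)).1
          (c (resSub d Finset.inter_subset_right z)).2), ?_, ?_, ?_⟩
  · intro y; exact h0 _
  · intro z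
    dsimp only
    by_cases h : q (glue d hu (c (resSub d Finset.inter_subset_right z)).1
        (c (resSub d Finset.inter_subset_right z)).2) = 0
    · rw [if_pos h]
    · rw [if_neg h]
      exact div_nonneg (h0 _) (h0 _)
  · intro x
    dsimp only
    set s := resTo d (γ ∩ δ) x with hs
    have e1 : resSub d Finset.inter_subset_left (resTo d γ x) = s := rfl
    have e2 : resSub d Finset.inter_subset_right (resTo d δ x) = s := rfl
    rw [e1, e2]
    by_cases h : P s
    · have hqd := hc3 s h
      rw [if_neg (ne_of_gt hqd)]
      have c1 : compat d (resTo d γ x) (c s).2 := e1.trans (hc2 s).symm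
      have c2 : compat d (resTo d γ x) (resTo d δ x) := rfl
      have c3 : compat d (c s).1 (c s).2 := (hc1 s).trans (hc2 s).symm
      have c4 : compat d (c s).1 (resTo d δ x) := (hc1 s).trans e2.symm
      have hquad := hq (resTo d γ x) (c s).1 (c s).2 (resTo d δ x) c1 c2 c3 c4
      rw [glue_resTo d hu x] at hquad
      field_simp
      linarith [hquad]
    · rw [if_pos (hc4 s h), mul_zero]
      by_contra hne
      exact h ⟨resTo d γ x, resTo d δ x, e1, e2,
        by rw [glue_resTo d hu x]; exact lt_of_le_of_ne (h0 x) (Ne.symm hne)⟩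

end Factor

end Stmt15
namespace Stmt15

open Finset

variable {m : ℕ} (d : Fin m → ℕ)

section Marg

noncomputable def fbig {γ : Finset (Fin m)} (𝓕 : Finset (Finset (Fin m)))
    (θ : (F : {F // F ∈ 𝓕}) → Psp d F.1 → ℝ) (y : Psp d γ) : Finset (Fin m) → ℝ :=
  fun F => if h : F ∈ 𝓕 ∧ F ⊆ γ then θ ⟨F, h.1⟩ (fun i => y ⟨i.1, h.2 i.2⟩) else 1

/-- reindexing lemma for products over the filtered facet family -/
lemma prod_dite_filter {γ : Finset (Fin m)} {𝓕 : Finset (Finset (Fin m))}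
    (θ : (F : {F // F ∈ 𝓕}) → Psp d F.1 → ℝ) (y : Psp d γ) :
    (∏ F : {F // F ∈ 𝓕.filter (· ⊆ γ)},
        θ ⟨F.1, (Finset.mem_filter.mp F.2).1⟩
          (fun i => y ⟨i.1, (Finset.mem_filter.mp F.2).2 i.2⟩))
      = ∏ F : {F // F ∈ 𝓕},
          (if h : F.1 ⊆ γ then θ F (fun i => y ⟨i.1, h i.2⟩) else 1) := by
  classical
  have h1 : (∏ F : {F // F ∈ 𝓕.filter (· ⊆ γ)},
      θ ⟨F.1, (Finset.mem_filter.mp F.2).1⟩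
        (fun i => y ⟨i.1, (Finset.mem_filter.mp F.2).2 i.2⟩))
      = ∏ F : {F // F ∈ 𝓕.filter (· ⊆ γ)}, fbig d 𝓕 θ y F.1 := by
    refine Finset.prod_congr rfl fun F _ => ?_
    have hm := Finset.mem_filter.mp F.2
    have he : fbig d 𝓕 θ y F.1
        = θ ⟨F.1, hm.1⟩ (fun i => y ⟨i.1, hm.2 i.2⟩) := dif_pos ⟨hm.1, hm.2⟩
    rw [he]
  have h2 : (∏ F : {F // F ∈ 𝓕}, (if h : F.1 ⊆ γ then θ F (fun i => y ⟨i.1, h i.2⟩) else 1))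
      = ∏ F : {F // F ∈ 𝓕}, (if F.1 ⊆ γ then fbig d 𝓕 θ y F.1 else 1) := by
    refine Finset.prod_congr rfl fun F _ => ?_
    by_cases h : F.1 ⊆ γ
    · have he : fbig d 𝓕 θ y F.1
          = θ ⟨F.1, F.2⟩ (fun i => y ⟨i.1, h i.2⟩) := dif_pos ⟨F.2, h⟩
      rw [dif_pos h, if_pos h, he]
    · rw [dif_neg h, if_neg h]
  rw [h1, h2, ← Finset.prod_subtype (𝓕.filter (· ⊆ γ)) (fun x => Iff.rfl) (fbig d 𝓕 θ y),
    ← Finset.prod_subtype 𝓕 (fun x => Iff.rfl) (fun F => if F ⊆ γ then fbig d 𝓕 θ y F else 1),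
    Finset.prod_filter]

/-- core: marginal+tilt of a model point, normalized, is in the sub-model -/
lemma tilt_marg_mem {γ δ : Finset (Fin m)} (hu : γ ∪ δ = Finset.univ)
    {𝓕 : Finset (Finset (Fin m))} (hsp : ∀ F ∈ 𝓕, F ⊆ γ ∨ F ⊆ δ)
    (F₁ : Finset (Fin m)) (hF₁ : F₁ ∈ 𝓕) (hF₁γ : F₁ ⊆ γ) (hSF₁ : γ ∩ δ ⊆ F₁)
    (g : Psp d (γ ∩ δ) → ℝ) (hg : ∀ s, 0 < g s) (x₀ : Xsp d)
    {r : Xsp d → ℝ} (hr : r ∈ hierModel d 𝓕) :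
    0 < (∑ y, margF d γ r y * g (resSub d Finset.inter_subset_left y)) ∧
    (∑ y, margF d γ r y * g (resSub d Finset.inter_subset_left y))⁻¹ •
      (fun y => margF d γ r y * g (resSub d Finset.inter_subset_left y)) ∈
      hierModelSub d γ (𝓕.filter (· ⊆ γ)) (fun F hF => (Finset.mem_filter.mp hF).2) := by
  classical
  obtain ⟨-, θ, hθ, Z, hZ, hform⟩ := hr
  set Aθ : Psp d γ → ℝ := (fun y => ∏ F : {F // F ∈ 𝓕},
    (if h : F.1 ⊆ γ then θ F (fun i => y ⟨i.1, h i.2⟩) else 1)) with hAθ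
  set Bθ : Psp d δ → ℝ := (fun z => ∏ F : {F // F ∈ 𝓕},
    (if h : F.1 ⊆ γ then 1
      else θ F (fun i => z ⟨i.1, ((hsp F.1 F.2).resolve_left h) i.2⟩))) with hBθ
  have hApos : ∀ y, 0 < Aθ y := by
    intro y; rw [hAθ]; dsimp only; refine Finset.prod_pos fun F _ => ?_
    by_cases h : F.1 ⊆ γ
    · rw [dif_pos h]; exact hθ F _
    · rw [dif_neg h]; exact one_pos
  have hBpos : ∀ z, 0 < Bθ z := by
    intro z; rw [hBθ]; dsimp only; refine Finset.prod_pos fun F _ => ?_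
    by_cases h : F.1 ⊆ γ
    · rw [dif_pos h]; exact one_pos
    · rw [dif_neg h]; exact hθ F _
  have hAB : ∀ x, r x = (1/Z) * (Aθ (resTo d γ x) * Bθ (resTo d δ x)) := by
    intro x
    rw [hform x, hAθ, hBθ]
    dsimp only
    rw [← Finset.prod_mul_distrib]
    congr 1
    refine Finset.prod_congr rfl fun F _ => ?_
    by_cases h : F.1 ⊆ γ
    · rw [dif_pos h, dif_pos h, mul_one]; rfl
    · rw [dif_neg h, dif_neg h, one_mul]; rfl
  set HB : Psp d (γ ∩ δ) → ℝ := (fun s =>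
    ∑ z, if resSub d Finset.inter_subset_right z = s then Bθ z else 0) with hHB
  have hHBpos : ∀ s, 0 < HB s := by
    intro s
    obtain ⟨z, hz⟩ := exists_ext d x₀ s
    rw [hHB]; dsimp only
    refine Finset.sum_pos' (fun z' _ => ?_) ⟨z, Finset.mem_univ z, ?_⟩
    · by_cases h : resSub d Finset.inter_subset_right z' = s
      · rw [if_pos h]; exact (hBpos z').le
      · rw [if_neg h]
    · rw [if_pos hz]; exact hBpos z
  have hmarg : ∀ y, margF d γ r y
      = (1/Z) * Aθ y * HB (resSub d Finset.inter_subset_left y) := by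
    intro y
    rw [margF_glue d hu]
    have he : ∀ z, (if compat d y z then r (glue d hu y z) else 0)
        = (1/Z) * Aθ y * (if resSub d Finset.inter_subset_right z
            = resSub d Finset.inter_subset_left y then Bθ z else 0) := by
      intro z
      by_cases hc : compat d y z
      · have hc' : resSub d Finset.inter_subset_left y
            = resSub d Finset.inter_subset_right z := hc
        rw [if_pos hc, if_pos hc'.symm, hAB, resTo_glue_left d hu,
          resTo_glue_right d hu hc]
        ring
      · have hc' : ¬ (resSub d Finset.inter_subset_right z
            = resSub d Finset.inter_subset_left y) := fun h => hc h.symm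
        rw [if_neg hc, if_neg hc', mul_zero]
    rw [Finset.sum_congr rfl fun z _ => he z, ← Finset.mul_sum, hHB]
  have hΦpos : ∀ y, 0 < margF d γ r y * g (resSub d Finset.inter_subset_left y) := by
    intro y
    rw [hmarg y]
    have h1 := hApos y
    have h2 := hHBpos (resSub d Finset.inter_subset_left y)
    have h3 := hg (resSub d Finset.inter_subset_left y)
    have h1Z : 0 < 1/Z := one_div_pos.mpr hZ
    positivity
  have hcpos : 0 < ∑ y, margF d γ r y * g (resSub d Finset.inter_subset_left y) :=
    Finset.sum_pos (fun y _ => hΦpos y) ⟨resTo d γ x₀, Finset.mem_univ _⟩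
  refine ⟨hcpos, ⟨?_, ?_⟩, ?_⟩
  · intro y
    simp only [Pi.smul_apply, smul_eq_mul]
    exact mul_nonneg (inv_nonneg.mpr hcpos.le) (hΦpos y).le
  · simp only [Pi.smul_apply, smul_eq_mul]
    rw [← Finset.mul_sum]
    exact inv_mul_cancel₀ (ne_of_gt hcpos)
  · have hF₁' : F₁ ∈ 𝓕.filter (· ⊆ γ) := Finset.mem_filter.mpr ⟨hF₁, hF₁γ⟩
    refine ⟨fun F yF => θ ⟨F.1, (Finset.mem_filter.mp F.2).1⟩ yF *
        (if h : F.1 = F₁ then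
          HB (resSub d (by rw [h]; exact hSF₁) yF) * g (resSub d (by rw [h]; exact hSF₁) yF)
          else 1), ?_,
      Z * (∑ y, margF d γ r y * g (resSub d Finset.inter_subset_left y)),
      mul_pos hZ hcpos, ?_⟩
    · intro F yF
      refine mul_pos (hθ _ _) ?_
      by_cases h : F.1 = F₁
      · rw [dif_pos h]; exact mul_pos (hHBpos _) (hg _)
      · rw [dif_neg h]; exact one_pos
    · intro y
      rw [Finset.prod_mul_distrib]
      have hp1 : (∏ F : {F // F ∈ 𝓕.filter (· ⊆ γ)},
          θ ⟨F.1, (Finset.mem_filter.mp F.2).1⟩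
            (fun i => y ⟨i.1, (Finset.mem_filter.mp F.2).2 i.2⟩)) = Aθ y := by
        rw [prod_dite_filter d θ y, hAθ]
      have hp2 : (∏ F : {F // F ∈ 𝓕.filter (· ⊆ γ)},
          (if h : F.1 = F₁ then
            HB (resSub d (by rw [h]; exact hSF₁)
              (fun i => y ⟨i.1, (Finset.mem_filter.mp F.2).2 i.2⟩)) *
            g (resSub d (by rw [h]; exact hSF₁)
              (fun i => y ⟨i.1, (Finset.mem_filter.mp F.2).2 i.2⟩))
            else 1))
          = HB (resSub d Finset.inter_subset_left y) *
            g (resSub d Finset.inter_subset_left y) := by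
        rw [Finset.prod_eq_single (⟨F₁, hF₁'⟩ : {F // F ∈ 𝓕.filter (· ⊆ γ)})]
        · rw [dif_pos rfl]; rfl
        · intro b _ hb
          rw [dif_neg fun h => hb (Subtype.ext h)]
        · intro h; exact absurd (Finset.mem_univ _) h
      rw [hp1, hp2]
      simp only [Pi.smul_apply, smul_eq_mul]
      rw [hmarg y]
      have h2 := ne_of_gt (hHBpos (resSub d Finset.inter_subset_left y))
      have hZ' := ne_of_gt hZ
      have hc' := ne_of_gt hcpos
      field_simp

lemma margF_continuous (F : Finset (Fin m)) (y : Psp d F) :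
    Continuous fun r : Xsp d → ℝ => margF d F r y := by
  unfold margF
  refine continuous_finset_sum _ fun x _ => ?_
  by_cases h : (∀ i : {j // j ∈ F}, x i.1 = y i)
  · simp only [if_pos h]; exact continuous_apply x
  · simp only [if_neg h]; exact continuous_const

/-- main closure membership lemma -/
lemma tilt_marg_mem_closure {γ δ : Finset (Fin m)} (hu : γ ∪ δ = Finset.univ)
    {𝓕 : Finset (Finset (Fin m))} (hsp : ∀ F ∈ 𝓕, F ⊆ γ ∨ F ⊆ δ)
    (F₁ : Finset (Fin m)) (hF₁ : F₁ ∈ 𝓕) (hF₁γ : F₁ ⊆ γ) (hSF₁ : γ ∩ δ ⊆ F₁)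
    (g : Psp d (γ ∩ δ) → ℝ) (hg : ∀ s, 0 < g s) (x₀ : Xsp d)
    {q : Xsp d → ℝ} (hq : q ∈ closure (hierModel d 𝓕))
    (hnorm : ∑ y, margF d γ q y * g (resSub d Finset.inter_subset_left y) = 1) :
    (fun y => margF d γ q y * g (resSub d Finset.inter_subset_left y)) ∈
      closure (hierModelSub d γ (𝓕.filter (· ⊆ γ))
        (fun F hF => (Finset.mem_filter.mp hF).2)) := by
  obtain ⟨r, hrM, hrt⟩ := mem_closure_iff_seq_limit.mp hq
  have hΦt : ∀ y, Filter.Tendsto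
      (fun n => margF d γ (r n) y * g (resSub d Finset.inter_subset_left y))
      Filter.atTop (nhds (margF d γ q y * g (resSub d Finset.inter_subset_left y))) := by
    intro y
    have hc : Continuous fun r' : Xsp d → ℝ =>
        margF d γ r' y * g (resSub d Finset.inter_subset_left y) :=
      (margF_continuous d γ y).mul continuous_const
    exact (hc.tendsto q).comp hrt
  have hct : Filter.Tendsto
      (fun n => ∑ y, margF d γ (r n) y * g (resSub d Finset.inter_subset_left y))
      Filter.atTop (nhds 1) := by
    have h1 : Filter.Tendsto
        (fun n => ∑ y, margF d γ (r n) y * g (resSub d Finset.inter_subset_left y))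
        Filter.atTop
        (nhds (∑ y, margF d γ q y * g (resSub d Finset.inter_subset_left y))) :=
      tendsto_finset_sum _ fun y _ => hΦt y
    rwa [hnorm] at h1
  have hmem : ∀ n, (∑ y, margF d γ (r n) y * g (resSub d Finset.inter_subset_left y))⁻¹ •
      (fun y => margF d γ (r n) y * g (resSub d Finset.inter_subset_left y)) ∈
      hierModelSub d γ (𝓕.filter (· ⊆ γ)) (fun F hF => (Finset.mem_filter.mp hF).2) :=
    fun n => (tilt_marg_mem d hu hsp F₁ hF₁ hF₁γ hSF₁ g hg x₀ (hrM n)).2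
  have htend : Filter.Tendsto
      (fun n => (∑ y, margF d γ (r n) y * g (resSub d Finset.inter_subset_left y))⁻¹ •
        (fun y => margF d γ (r n) y * g (resSub d Finset.inter_subset_left y)))
      Filter.atTop
      (nhds (fun y => margF d γ q y * g (resSub d Finset.inter_subset_left y))) := by
    rw [tendsto_pi_nhds]
    intro y
    simp only [Pi.smul_apply, smul_eq_mul]
    have h1 : Filter.Tendsto
        (fun n => (∑ y, margF d γ (r n) y * g (resSub d Finset.inter_subset_left y))⁻¹ *
          (margF d γ (r n) y * g (resSub d Finset.inter_subset_left y)))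
        Filter.atTop
        (nhds (1⁻¹ * (margF d γ q y * g (resSub d Finset.inter_subset_left y)))) :=
      Filter.Tendsto.mul (hct.inv₀ one_ne_zero) (hΦt y)
    simpa using h1
  exact mem_closure_of_tendsto htend (Filter.Eventually.of_forall hmem)

end Marg

end Stmt15
namespace Stmt15

open Finset

lemma gibbs {S : Type*} [Fintype S] {p q : S → ℝ} (hp : ∀ s, 0 < p s) (hq : ∀ s, 0 < q s)
    (hps : ∑ s, p s = 1) (hqs : ∑ s, q s = 1) :
    0 ≤ ∑ s, p s * Real.log (p s / q s) := by
  have h : ∀ s, p s - q s ≤ p s * Real.log (p s / q s) := by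
    intro s
    have hlog : Real.log (q s / p s) ≤ q s / p s - 1 :=
      Real.log_le_sub_one_of_pos (by have := hp s; have := hq s; positivity)
    have hl2 : Real.log (p s / q s) = - Real.log (q s / p s) := by
      rw [← Real.log_inv]
      congr 1
      rw [inv_div]
    rw [hl2]
    have h1 := hp s
    have h2 := hq s
    have h3 : q s / p s * p s = q s := div_mul_cancel₀ _ (ne_of_gt h1)
    nlinarith [mul_le_mul_of_nonneg_left hlog h1.le]
  calc (0:ℝ) = ∑ s, (p s - q s) := by rw [Finset.sum_sub_distrib, hps, hqs]; ring
  _ ≤ _ := Finset.sum_le_sum fun s _ => h s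

end Stmt15

set_option maxHeartbeats 4000000 in
open Stmt15 in
/-- if `p` attains the maximum divergence `D(M_𝓕)`, has strictly positive
`S`-marginal, and `Q^α_{p_α}` (resp. `Q^β_{p_β}`) contains a point attaining `D(M_{𝓕_α})`
(resp. `D(M_{𝓕_β})`), then `D(M_𝓕) ≥ D(M_{𝓕_α}) + D(M_{𝓕_β})`. -/
theorem stmt15 {m : ℕ} (d : Fin m → ℕ) (𝓕 : Finset (Finset (Fin m)))
    (hcov : ∀ i : Fin m, ∃ F ∈ 𝓕, i ∈ F)
    (α β : Finset (Fin m)) (hunion : α ∪ β = Finset.univ)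
    (hsplit : ∀ F ∈ 𝓕, F ⊆ α ∨ F ⊆ β)
    (hS1 : ∃ F ∈ 𝓕, α ∩ β ⊆ F ∧ F ⊆ α)
    (hS2 : ∃ F ∈ 𝓕, α ∩ β ⊆ F ∧ F ⊆ β)
    (p : (∀ i, Fin (d i)) → ℝ) (hp : p ∈ simplex (∀ i, Fin (d i)))
    (hpmax : divFrom (closure (hierModel d 𝓕)) p =
      ⨆ u ∈ simplex (∀ i, Fin (d i)), divFrom (closure (hierModel d 𝓕)) u)
    (hpS : ∀ y, 0 < margF d (α ∩ β) p y)
    (hα : ∃ v : ((i : {j // j ∈ α}) → Fin (d i.1)) → ℝ,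
      (v ∈ simplex ((i : {j // j ∈ α}) → Fin (d i.1)) ∧
        ∀ F ∈ 𝓕, F ⊆ α → margSub d α F v = margSub d α F (margF d α p)) ∧
      divFrom (closure (hierModelSub d α (𝓕.filter (· ⊆ α))
          (fun F hF => (Finset.mem_filter.mp hF).2))) v =
        ⨆ u ∈ simplex ((i : {j // j ∈ α}) → Fin (d i.1)),
          divFrom (closure (hierModelSub d α (𝓕.filter (· ⊆ α))
            (fun F hF => (Finset.mem_filter.mp hF).2))) u)
    (hβ : ∃ w : ((i : {j // j ∈ β}) → Fin (d i.1)) → ℝ,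
      (w ∈ simplex ((i : {j // j ∈ β}) → Fin (d i.1)) ∧
        ∀ F ∈ 𝓕, F ⊆ β → margSub d β F w = margSub d β F (margF d β p)) ∧
      divFrom (closure (hierModelSub d β (𝓕.filter (· ⊆ β))
          (fun F hF => (Finset.mem_filter.mp hF).2))) w =
        ⨆ u ∈ simplex ((i : {j // j ∈ β}) → Fin (d i.1)),
          divFrom (closure (hierModelSub d β (𝓕.filter (· ⊆ β))
            (fun F hF => (Finset.mem_filter.mp hF).2))) u) :
    (⨆ u ∈ simplex ((i : {j // j ∈ α}) → Fin (d i.1)),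
        divFrom (closure (hierModelSub d α (𝓕.filter (· ⊆ α))
          (fun F hF => (Finset.mem_filter.mp hF).2))) u) +
      (⨆ u ∈ simplex ((i : {j // j ∈ β}) → Fin (d i.1)),
        divFrom (closure (hierModelSub d β (𝓕.filter (· ⊆ β))
          (fun F hF => (Finset.mem_filter.mp hF).2))) u) ≤
      ⨆ u ∈ simplex (∀ i, Fin (d i)), divFrom (closure (hierModel d 𝓕)) u := by
  classical
  obtain ⟨F₁, hF₁m, hSF₁, hF₁α⟩ := hS1
  obtain ⟨F₂, hF₂m, hSF₂, hF₂β⟩ := hS2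
  obtain ⟨v, ⟨hvsimp, hvmarg⟩, hvmax⟩ := hα
  obtain ⟨w, ⟨hwsimp, hwmarg⟩, hwmax⟩ := hβ
  rcases isEmpty_or_nonempty (∀ i, Fin (d i)) with hE | hNE
  · exfalso
    have h2 := hp.2
    rw [Finset.univ_eq_empty, Finset.sum_empty] at h2
    exact one_ne_zero h2.symm
  obtain ⟨x₀⟩ := hNE
  -- S-marginals of v and w agree with that of p
  have hvS : margSub d α (α ∩ β) v = margF d (α ∩ β) p := by
    have h1 := hvmarg F₁ hF₁m hF₁α
    have h2 : margSub d α (α ∩ β) v = margSub d α (α ∩ β) (margF d α p) := by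
      funext s
      rw [margSub_tower d hSF₁ hF₁α v s, margSub_tower d hSF₁ hF₁α (margF d α p) s, h1]
    rw [h2, margSub_margF d Finset.inter_subset_left p]
  have hwS : margSub d β (α ∩ β) w = margF d (α ∩ β) p := by
    have h1 := hwmarg F₂ hF₂m hF₂β
    have h2 : margSub d β (α ∩ β) w = margSub d β (α ∩ β) (margF d β p) := by
      funext s
      rw [margSub_tower d hSF₂ hF₂β w s, margSub_tower d hSF₂ hF₂β (margF d β p) s, h1]
    rw [h2, margSub_margF d Finset.inter_subset_right p]
  have hvslice : ∀ s, (∑ y, if resSub d Finset.inter_subset_left y = s then v y else 0)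
      = margF d (α ∩ β) p s := by
    intro s
    rw [← margSub_eq d Finset.inter_subset_left v s, hvS]
  have hwslice : ∀ s, (∑ z, if resSub d Finset.inter_subset_right z = s then w z else 0)
      = margF d (α ∩ β) p s := by
    intro s
    rw [← margSub_eq d Finset.inter_subset_right w s, hwS]
  have hcompatw : ∀ y : Psp d α, (∑ z, if compat d y z then w z else 0)
      = margF d (α ∩ β) p (resSub d Finset.inter_subset_left y) := by
    intro y
    have h1 : (∑ z, if compat d y z then w z else 0)
        = ∑ z, if resSub d Finset.inter_subset_right z
            = resSub d Finset.inter_subset_left y then w z else 0 :=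
      Finset.sum_congr rfl fun z _ =>
        if_congr (Iff.intro (fun h => Eq.symm h) (fun h => Eq.symm h)) rfl rfl
    rw [h1]
    exact hwslice (resSub d Finset.inter_subset_left y)
  have hcompatv : ∀ z : Psp d β, (∑ y, if compat d y z then v y else 0)
      = margF d (α ∩ β) p (resSub d Finset.inter_subset_right z) := by
    intro z
    have h1 : (∑ y, if compat d y z then v y else 0)
        = ∑ y, if resSub d Finset.inter_subset_left y
            = resSub d Finset.inter_subset_right z then v y else 0 :=
      Finset.sum_congr rfl fun y _ => if_congr Iff.rfl rfl rfl
    rw [h1]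
    exact hvslice (resSub d Finset.inter_subset_right z)
  -- the glued distribution
  set p' : (∀ i, Fin (d i)) → ℝ := fun x =>
    v (resTo d α x) * w (resTo d β x) / margF d (α ∩ β) p (resTo d (α ∩ β) x) with hp'def
  have hp'glue : ∀ (y : Psp d α) (z : Psp d β), compat d y z →
      p' (glue d hunion y z) = v y * w z
        / margF d (α ∩ β) p (resSub d Finset.inter_subset_left y) := by
    intro y z hc
    rw [hp'def]
    dsimp only
    rw [resTo_glue_left d hunion, resTo_glue_right d hunion hc, resTo_inter_glue d hunion]
  have hp'mem : p' ∈ simplex (∀ i, Fin (d i)) := by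
    constructor
    · intro x
      rw [hp'def]
      dsimp only
      exact div_nonneg (mul_nonneg (hvsimp.1 _) (hwsimp.1 _)) (hpS _).le
    · rw [sum_glue d hunion p']
      have he : ∀ (y : Psp d α) (z : Psp d β),
          (if compat d y z then p' (glue d hunion y z) else 0)
          = (v y / margF d (α ∩ β) p (resSub d Finset.inter_subset_left y)) *
            (if compat d y z then w z else 0) := by
        intro y z
        by_cases hc : compat d y z
        · rw [if_pos hc, if_pos hc, hp'glue y z hc]
          ring
        · rw [if_neg hc, if_neg hc, mul_zero]
      rw [Finset.sum_congr rfl fun y _ => Finset.sum_congr rfl fun z _ => he y z]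
      have he2 : ∀ y : Psp d α,
          (∑ z, (v y / margF d (α ∩ β) p (resSub d Finset.inter_subset_left y)) *
            (if compat d y z then w z else 0)) = v y := by
        intro y
        rw [← Finset.mul_sum, hcompatw y]
        exact div_mul_cancel₀ _ (ne_of_gt (hpS _))
      rw [Finset.sum_congr rfl fun y _ => he2 y]
      exact hvsimp.2
  -- main bound
  have hbound : ∀ q ∈ closure (hierModel d 𝓕),
      divFrom (closure (hierModelSub d α (𝓕.filter (· ⊆ α))
          (fun F hF => (Finset.mem_filter.mp hF).2))) v +
        divFrom (closure (hierModelSub d β (𝓕.filter (· ⊆ β))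
          (fun F hF => (Finset.mem_filter.mp hF).2))) w ≤ KL p' q := by
    intro q hq
    have hqsimp := closure_hierModel_subset_simplex d 𝓕 hq
    by_cases hsupp : ∀ x, q x = 0 → p' x = 0
    case neg =>
      have hKL : KL p' q = ⊤ := if_neg hsupp
      rw [hKL]; exact le_top
    obtain ⟨A, B, hA0, hB0, hfac⟩ := exists_factor d hunion x₀ hqsimp.1
      (closure_hierModel_subset_Cset d hunion hsplit hq)
    set AS : Psp d (α ∩ β) → ℝ :=
      (fun s => ∑ y, if resSub d Finset.inter_subset_left y = s then A y else 0) with hASdef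
    set BS : Psp d (α ∩ β) → ℝ :=
      (fun s => ∑ z, if resSub d Finset.inter_subset_right z = s then B z else 0) with hBSdef
    have hASnn : ∀ s, 0 ≤ AS s := by
      intro s; rw [hASdef]; dsimp only
      refine Finset.sum_nonneg fun y _ => ?_
      by_cases h : resSub d Finset.inter_subset_left y = s
      · rw [if_pos h]; exact hA0 y
      · rw [if_neg h]
    have hBSnn : ∀ s, 0 ≤ BS s := by
      intro s; rw [hBSdef]; dsimp only
      refine Finset.sum_nonneg fun z _ => ?_
      by_cases h : resSub d Finset.inter_subset_right z = s
      · rw [if_pos h]; exact hB0 z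
      · rw [if_neg h]
    have hqS_AB : ∀ s, margF d (α ∩ β) q s = AS s * BS s := by
      intro s
      rw [margF_eq, sum_glue d hunion (fun x => if resTo d (α ∩ β) x = s then q x else 0)]
      have he : ∀ (y : Psp d α) (z : Psp d β),
          (if compat d y z then (if resTo d (α ∩ β) (glue d hunion y z) = s
              then q (glue d hunion y z) else 0) else 0)
          = (if resSub d Finset.inter_subset_left y = s then A y else 0) *
            (if resSub d Finset.inter_subset_right z = s then B z else 0) := by
        intro y z
        by_cases hc : compat d y z
        · have hcc : resSub d Finset.inter_subset_left y
              = resSub d Finset.inter_subset_right z := hc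
          rw [if_pos hc, resTo_inter_glue d hunion]
          by_cases hys : resSub d Finset.inter_subset_left y = s
          · have hzs : resSub d Finset.inter_subset_right z = s := hcc.symm.trans hys
            rw [if_pos hys, if_pos hys, if_pos hzs, hfac, resTo_glue_left d hunion,
              resTo_glue_right d hunion hc]
          · rw [if_neg hys, if_neg hys, zero_mul]
        · rw [if_neg hc]
          by_cases hys : resSub d Finset.inter_subset_left y = s
          · by_cases hzs : resSub d Finset.inter_subset_right z = s
            · exact absurd (show compat d y z from hys.trans hzs.symm) hc
            · rw [if_neg hzs, mul_zero]
          · rw [if_neg hys, zero_mul]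
      rw [Finset.sum_congr rfl fun y _ => Finset.sum_congr rfl fun z _ => he y z]
      rw [hASdef, hBSdef]
      dsimp only
      rw [Finset.sum_mul_sum]
    have hqSnn : ∀ s, 0 ≤ margF d (α ∩ β) q s := by
      intro s; rw [margF_eq]
      refine Finset.sum_nonneg fun x _ => ?_
      by_cases h : resTo d (α ∩ β) x = s
      · rw [if_pos h]; exact hqsimp.1 x
      · rw [if_neg h]
    have hextrv : ∀ s : Psp d (α ∩ β), ∃ y : Psp d α, resSub d Finset.inter_subset_left y = s ∧ 0 < v y := by
      intro s
      have hvposslice : 0 < ∑ y, if resSub d Finset.inter_subset_left y = s then v y else 0 := by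
        rw [hvslice]; exact hpS s
      obtain ⟨y, hy⟩ := exists_pos_of_sum_pos hvposslice
      by_cases hcond : resSub d Finset.inter_subset_left y = s
      · exact ⟨y, hcond, by rwa [if_pos hcond] at hy⟩
      · rw [if_neg hcond] at hy; exact absurd hy (lt_irrefl 0)
    have hextrw : ∀ s : Psp d (α ∩ β), ∃ z : Psp d β, resSub d Finset.inter_subset_right z = s ∧ 0 < w z := by
      intro s
      have hwposslice : 0 < ∑ z, if resSub d Finset.inter_subset_right z = s then w z else 0 := by
        rw [hwslice]; exact hpS s
      obtain ⟨z, hz⟩ := exists_pos_of_sum_pos hwposslice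
      by_cases hcond : resSub d Finset.inter_subset_right z = s
      · exact ⟨z, hcond, by rwa [if_pos hcond] at hz⟩
      · rw [if_neg hcond] at hz; exact absurd hz (lt_irrefl 0)
    have hqSpos : ∀ s, 0 < margF d (α ∩ β) q s := by
      intro s
      rcases (hqSnn s).lt_or_eq with h | h
      · exact h
      exfalso
      obtain ⟨y, hys, hv⟩ := hextrv s
      obtain ⟨z, hzs, hw⟩ := hextrw s
      have hc : compat d y z := hys.trans hzs.symm
      have hqx : q (glue d hunion y z) = 0 := by
        have h' := h.symm
        rw [margF_eq] at h'
        have hnn : ∀ x ∈ Finset.univ, 0 ≤ (if resTo d (α ∩ β) x = s then q x else 0) := by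
          intro x _
          by_cases hh : resTo d (α ∩ β) x = s
          · rw [if_pos hh]; exact hqsimp.1 x
          · rw [if_neg hh]
        have := (Finset.sum_eq_zero_iff_of_nonneg hnn).mp h' (glue d hunion y z)
          (Finset.mem_univ _)
        rw [resTo_inter_glue d hunion, if_pos hys] at this
        exact this
      have hp'pos : 0 < p' (glue d hunion y z) := by
        rw [hp'glue y z hc]
        exact div_pos (mul_pos hv hw) (hpS _)
      rw [hsupp _ hqx] at hp'pos
      exact lt_irrefl _ hp'pos
    have hASpos : ∀ s, 0 < AS s := by
      intro s
      rcases (hASnn s).lt_or_eq with h | h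
      · exact h
      exfalso
      have h2 := hqSpos s
      rw [hqS_AB, ← h, zero_mul] at h2
      exact lt_irrefl _ h2
    have hBSpos : ∀ s, 0 < BS s := by
      intro s
      rcases (hBSnn s).lt_or_eq with h | h
      · exact h
      exfalso
      have h2 := hqSpos s
      rw [hqS_AB, ← h, mul_zero] at h2
      exact lt_irrefl _ h2
    have sup1 : ∀ y, 0 < v y → 0 < A y := by
      intro y hv
      obtain ⟨z, hzs, hw⟩ := hextrw (resSub d Finset.inter_subset_left y)
      have hc : compat d y z := hzs.symm
      have hp'pos : 0 < p' (glue d hunion y z) := by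
        rw [hp'glue y z hc]
        exact div_pos (mul_pos hv hw) (hpS _)
      have hqne : q (glue d hunion y z) ≠ 0 := by
        intro h0
        rw [hsupp _ h0] at hp'pos
        exact lt_irrefl _ hp'pos
      have hfg := hfac (glue d hunion y z)
      rw [resTo_glue_left d hunion, resTo_glue_right d hunion hc] at hfg
      rcases (hA0 y).lt_or_eq with h | h
      · exact h
      exact absurd (by rw [hfg, ← h, zero_mul]) hqne
    have sup2 : ∀ z, 0 < w z → 0 < B z := by
      intro z hw
      obtain ⟨y, hys, hv⟩ := hextrv (resSub d Finset.inter_subset_right z)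
      have hc : compat d y z := hys
      have hp'pos : 0 < p' (glue d hunion y z) := by
        rw [hp'glue y z hc]
        exact div_pos (mul_pos hv hw) (hpS _)
      have hqne : q (glue d hunion y z) ≠ 0 := by
        intro h0
        rw [hsupp _ h0] at hp'pos
        exact lt_irrefl _ hp'pos
      have hfg := hfac (glue d hunion y z)
      rw [resTo_glue_left d hunion, resTo_glue_right d hunion hc] at hfg
      rcases (hB0 z).lt_or_eq with h | h
      · exact h
      exact absurd (by rw [hfg, ← h, mul_zero]) hqne
    have hqα_AB : ∀ y, margF d α q y = A y * BS (resSub d Finset.inter_subset_left y) := by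
      intro y
      rw [margF_glue d hunion]
      have he : ∀ z, (if compat d y z then q (glue d hunion y z) else 0)
          = A y * (if resSub d Finset.inter_subset_right z
              = resSub d Finset.inter_subset_left y then B z else 0) := by
        intro z
        by_cases hc : compat d y z
        · rw [if_pos hc, if_pos (Eq.symm hc), hfac, resTo_glue_left d hunion,
            resTo_glue_right d hunion hc]
        · rw [if_neg hc, if_neg (fun h => hc (Eq.symm h)), mul_zero]
      rw [Finset.sum_congr rfl fun z _ => he z, ← Finset.mul_sum, hBSdef]
    have hqβ_AB : ∀ z, margF d β q z = AS (resSub d Finset.inter_subset_right z) * B z := by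
      intro z
      rw [margF_glue_right d hunion]
      have he : ∀ y, (if compat d y z then q (glue d hunion y z) else 0)
          = (if resSub d Finset.inter_subset_left y
              = resSub d Finset.inter_subset_right z then A y else 0) * B z := by
        intro y
        by_cases hc : compat d y z
        · rw [if_pos hc, if_pos (show resSub d Finset.inter_subset_left y
              = resSub d Finset.inter_subset_right z from hc), hfac,
            resTo_glue_left d hunion, resTo_glue_right d hunion hc]
        · rw [if_neg hc, if_neg (show ¬ (resSub d Finset.inter_subset_left y
              = resSub d Finset.inter_subset_right z) from hc), zero_mul]
      rw [Finset.sum_congr rfl fun y _ => he y, ← Finset.sum_mul, hASdef]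
    have hpS1 : ∑ s, margF d (α ∩ β) p s = 1 := by rw [sum_margF]; exact hp.2
    have hqS1 : ∑ s, margF d (α ∩ β) q s = 1 := by rw [sum_margF]; exact hqsimp.2
    have hcolv : ∀ u : Psp d (α ∩ β) → ℝ,
        (∑ y, v y * u (resSub d Finset.inter_subset_left y))
          = ∑ s, margF d (α ∩ β) p s * u s := by
      intro u
      rw [← sum_margSub_mul d Finset.inter_subset_left v u]
      exact Finset.sum_congr rfl fun s _ => by rw [hvS]
    have hcolw : ∀ u : Psp d (α ∩ β) → ℝ,
        (∑ z, w z * u (resSub d Finset.inter_subset_right z))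
          = ∑ s, margF d (α ∩ β) p s * u s := by
      intro u
      rw [← sum_margSub_mul d Finset.inter_subset_right w u]
      exact Finset.sum_congr rfl fun s _ => by rw [hwS]
    set gtilt : Psp d (α ∩ β) → ℝ :=
      (fun s => margF d (α ∩ β) p s / margF d (α ∩ β) q s) with hgdef
    have hgpos : ∀ s, 0 < gtilt s := by
      intro s; rw [hgdef]; exact div_pos (hpS s) (hqSpos s)
    have hnormα : ∑ y, margF d α q y * gtilt (resSub d Finset.inter_subset_left y) = 1 := by
      rw [sum_margF_mul d α q (fun ya => gtilt (resSub d Finset.inter_subset_left ya))]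
      have h1 : ∀ x : ∀ i, Fin (d i),
          q x * gtilt (resSub d Finset.inter_subset_left (resTo d α x))
            = q x * gtilt (resTo d (α ∩ β) x) := fun x => rfl
      rw [Finset.sum_congr rfl fun x _ => h1 x, ← sum_margF_mul d (α ∩ β) q gtilt]
      have h2 : ∀ s, margF d (α ∩ β) q s * gtilt s = margF d (α ∩ β) p s := by
        intro s
        rw [hgdef]
        dsimp only
        rw [mul_comm, div_mul_cancel₀ _ (ne_of_gt (hqSpos s))]
      rw [Finset.sum_congr rfl fun s _ => h2 s, hpS1]
    have hmemα := tilt_marg_mem_closure d hunion hsplit F₁ hF₁m hF₁α hSF₁ gtilt hgpos x₀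
      hq hnormα
    have hunion' : β ∪ α = Finset.univ := by rw [Finset.union_comm]; exact hunion
    have hsplit' : ∀ F ∈ 𝓕, F ⊆ β ∨ F ⊆ α := fun F hF => Or.symm (hsplit F hF)
    have hSF₂' : β ∩ α ⊆ F₂ := by rw [Finset.inter_comm]; exact hSF₂
    have hgβpos : ∀ s : Psp d (β ∩ α),
        0 < gtilt (fun i => s ⟨i.1, Finset.mem_inter.mpr
          ⟨(Finset.mem_inter.mp i.2).2, (Finset.mem_inter.mp i.2).1⟩⟩) :=
      fun s => hgpos _
    have hnormβ : ∑ z, margF d β q z *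
        (fun s : Psp d (β ∩ α) => gtilt (fun i => s ⟨i.1, Finset.mem_inter.mpr
          ⟨(Finset.mem_inter.mp i.2).2, (Finset.mem_inter.mp i.2).1⟩⟩))
        (resSub d Finset.inter_subset_left z) = 1 := by
      have h0 : (∑ z, margF d β q z *
          (fun s : Psp d (β ∩ α) => gtilt (fun i => s ⟨i.1, Finset.mem_inter.mpr
            ⟨(Finset.mem_inter.mp i.2).2, (Finset.mem_inter.mp i.2).1⟩⟩))
          (resSub d Finset.inter_subset_left z))
          = ∑ z, margF d β q z * gtilt (resSub d Finset.inter_subset_right z) :=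
        Finset.sum_congr rfl fun z _ => rfl
      rw [h0]
      rw [sum_margF_mul d β q (fun zb => gtilt (resSub d Finset.inter_subset_right zb))]
      have h1 : ∀ x : ∀ i, Fin (d i),
          q x * gtilt (resSub d Finset.inter_subset_right (resTo d β x))
            = q x * gtilt (resTo d (α ∩ β) x) := fun x => rfl
      rw [Finset.sum_congr rfl fun x _ => h1 x, ← sum_margF_mul d (α ∩ β) q gtilt]
      have h2 : ∀ s, margF d (α ∩ β) q s * gtilt s = margF d (α ∩ β) p s := by
        intro s
        rw [hgdef]
        dsimp only
        rw [mul_comm, div_mul_cancel₀ _ (ne_of_gt (hqSpos s))]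
      rw [Finset.sum_congr rfl fun s _ => h2 s, hpS1]
    have hmemβ' := tilt_marg_mem_closure d hunion' hsplit' F₂ hF₂m hF₂β hSF₂'
      (fun s : Psp d (β ∩ α) => gtilt (fun i => s ⟨i.1, Finset.mem_inter.mpr
        ⟨(Finset.mem_inter.mp i.2).2, (Finset.mem_inter.mp i.2).1⟩⟩))
      hgβpos x₀ hq hnormβ
    have hmemβ : (fun z => margF d β q z * gtilt (resSub d Finset.inter_subset_right z)) ∈
        closure (hierModelSub d β (𝓕.filter (· ⊆ β))
          (fun F hF => (Finset.mem_filter.mp hF).2)) := hmemβ'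
    -- support conditions
    have hsuppα : ∀ y, (margF d α q y * gtilt (resSub d Finset.inter_subset_left y)) = 0
        → v y = 0 := by
      intro y h0
      by_contra hvne
      have hv : 0 < v y := lt_of_le_of_ne (hvsimp.1 y) (Ne.symm hvne)
      have hpos : 0 < margF d α q y * gtilt (resSub d Finset.inter_subset_left y) :=
        mul_pos (by rw [hqα_AB y]; exact mul_pos (sup1 y hv) (hBSpos _)) (hgpos _)
      rw [h0] at hpos
      exact lt_irrefl _ hpos
    have hsuppβ : ∀ z, (margF d β q z * gtilt (resSub d Finset.inter_subset_right z)) = 0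
        → w z = 0 := by
      intro z h0
      by_contra hwne
      have hw : 0 < w z := lt_of_le_of_ne (hwsimp.1 z) (Ne.symm hwne)
      have hpos : 0 < margF d β q z * gtilt (resSub d Finset.inter_subset_right z) :=
        mul_pos (by rw [hqβ_AB z]; exact mul_pos (hASpos _) (sup2 z hw)) (hgpos _)
      rw [h0] at hpos
      exact lt_irrefl _ hpos
    -- KL values
    have hKLp : KL p' q = (((∑ x, p' x * Real.log (p' x / q x)) : ℝ) : EReal) :=
      if_pos hsupp
    have hKLα : KL v (fun y => margF d α q y * gtilt (resSub d Finset.inter_subset_left y))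
        = (((∑ y, v y * Real.log (v y /
            (margF d α q y * gtilt (resSub d Finset.inter_subset_left y)))) : ℝ) : EReal) :=
      if_pos hsuppα
    have hKLβ : KL w (fun z => margF d β q z * gtilt (resSub d Finset.inter_subset_right z))
        = (((∑ z, w z * Real.log (w z /
            (margF d β q z * gtilt (resSub d Finset.inter_subset_right z)))) : ℝ) : EReal) :=
      if_pos hsuppβ
    -- real identities
    have hrealα : (∑ y, v y * Real.log (v y /
          (margF d α q y * gtilt (resSub d Finset.inter_subset_left y))))
        = (∑ y, v y * Real.log (v y / A y))
          + (∑ s, margF d (α ∩ β) p s * Real.log (AS s))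
          - (∑ s, margF d (α ∩ β) p s * Real.log (margF d (α ∩ β) p s)) := by
      have hterm : ∀ y, v y * Real.log (v y /
            (margF d α q y * gtilt (resSub d Finset.inter_subset_left y)))
          = v y * Real.log (v y / A y)
            + v y * Real.log (AS (resSub d Finset.inter_subset_left y))
            - v y * Real.log (margF d (α ∩ β) p (resSub d Finset.inter_subset_left y)) := by
        intro y
        rcases (hvsimp.1 y).lt_or_eq with hv | hv
        · have hA := sup1 y hv
          have hps := hpS (resSub d Finset.inter_subset_left y)
          have hqs := hqSpos (resSub d Finset.inter_subset_left y)
          have hAS := hASpos (resSub d Finset.inter_subset_left y)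
          have hBS := hBSpos (resSub d Finset.inter_subset_left y)
          have hexp : margF d α q y * gtilt (resSub d Finset.inter_subset_left y)
              = A y * margF d (α ∩ β) p (resSub d Finset.inter_subset_left y)
                  / AS (resSub d Finset.inter_subset_left y) := by
            rw [hqα_AB y, hgdef]
            dsimp only
            rw [hqS_AB]
            field_simp [ne_of_gt hAS, ne_of_gt hBS]
            try ring
          rw [hexp]
          have harg : v y / (A y * margF d (α ∩ β) p (resSub d Finset.inter_subset_left y)
                  / AS (resSub d Finset.inter_subset_left y))
              = v y / A y * (AS (resSub d Finset.inter_subset_left y)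
                  / margF d (α ∩ β) p (resSub d Finset.inter_subset_left y)) := by
            field_simp [ne_of_gt hA, ne_of_gt hps, ne_of_gt hAS]
            try ring
          rw [harg, Real.log_mul (by positivity) (by positivity),
            Real.log_div (ne_of_gt hv) (ne_of_gt hA),
            Real.log_div (ne_of_gt hAS) (ne_of_gt hps)]
          ring
        · rw [← hv]
          simp
      rw [Finset.sum_congr rfl fun y _ => hterm y]
      rw [Finset.sum_sub_distrib, Finset.sum_add_distrib]
      rw [hcolv (fun s => Real.log (AS s)),
        hcolv (fun s => Real.log (margF d (α ∩ β) p s))]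
    have hrealβ : (∑ z, w z * Real.log (w z /
          (margF d β q z * gtilt (resSub d Finset.inter_subset_right z))))
        = (∑ z, w z * Real.log (w z / B z))
          + (∑ s, margF d (α ∩ β) p s * Real.log (BS s))
          - (∑ s, margF d (α ∩ β) p s * Real.log (margF d (α ∩ β) p s)) := by
      have hterm : ∀ z, w z * Real.log (w z /
            (margF d β q z * gtilt (resSub d Finset.inter_subset_right z)))
          = w z * Real.log (w z / B z)
            + w z * Real.log (BS (resSub d Finset.inter_subset_right z))
            - w z * Real.log (margF d (α ∩ β) p (resSub d Finset.inter_subset_right z)) := by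
        intro z
        rcases (hwsimp.1 z).lt_or_eq with hw | hw
        · have hB := sup2 z hw
          have hps := hpS (resSub d Finset.inter_subset_right z)
          have hqs := hqSpos (resSub d Finset.inter_subset_right z)
          have hAS := hASpos (resSub d Finset.inter_subset_right z)
          have hBS := hBSpos (resSub d Finset.inter_subset_right z)
          have hexp : margF d β q z * gtilt (resSub d Finset.inter_subset_right z)
              = B z * margF d (α ∩ β) p (resSub d Finset.inter_subset_right z)
                  / BS (resSub d Finset.inter_subset_right z) := by
            rw [hqβ_AB z, hgdef]
            dsimp only
            rw [hqS_AB]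
            field_simp [ne_of_gt hAS, ne_of_gt hBS]
            try ring
          rw [hexp]
          have harg : w z / (B z * margF d (α ∩ β) p (resSub d Finset.inter_subset_right z)
                  / BS (resSub d Finset.inter_subset_right z))
              = w z / B z * (BS (resSub d Finset.inter_subset_right z)
                  / margF d (α ∩ β) p (resSub d Finset.inter_subset_right z)) := by
            field_simp [ne_of_gt hB, ne_of_gt hps, ne_of_gt hBS]
            try ring
          rw [harg, Real.log_mul (by positivity) (by positivity),
            Real.log_div (ne_of_gt hw) (ne_of_gt hB),
            Real.log_div (ne_of_gt hBS) (ne_of_gt hps)]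
          ring
        · rw [← hw]
          simp
      rw [Finset.sum_congr rfl fun z _ => hterm z]
      rw [Finset.sum_sub_distrib, Finset.sum_add_distrib]
      rw [hcolw (fun s => Real.log (BS s)),
        hcolw (fun s => Real.log (margF d (α ∩ β) p s))]
    have hCorr : (∑ s, margF d (α ∩ β) p s *
          Real.log (margF d (α ∩ β) p s / margF d (α ∩ β) q s))
        = (∑ s, margF d (α ∩ β) p s * Real.log (margF d (α ∩ β) p s))
          - (∑ s, margF d (α ∩ β) p s * Real.log (AS s))
          - (∑ s, margF d (α ∩ β) p s * Real.log (BS s)) := by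
      rw [← Finset.sum_sub_distrib, ← Finset.sum_sub_distrib]
      refine Finset.sum_congr rfl fun s _ => ?_
      rw [hqS_AB s, Real.log_div (ne_of_gt (hpS s))
          (ne_of_gt (mul_pos (hASpos s) (hBSpos s))),
        Real.log_mul (ne_of_gt (hASpos s)) (ne_of_gt (hBSpos s))]
      ring
    have hGibbs : 0 ≤ ∑ s, margF d (α ∩ β) p s *
        Real.log (margF d (α ∩ β) p s / margF d (α ∩ β) q s) :=
      gibbs hpS hqSpos hpS1 hqS1
    have hrealmain : (∑ x, p' x * Real.log (p' x / q x))
        = (∑ y, v y * Real.log (v y / A y)) + (∑ z, w z * Real.log (w z / B z))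
          - (∑ s, margF d (α ∩ β) p s * Real.log (margF d (α ∩ β) p s)) := by
      rw [sum_glue d hunion (fun x => p' x * Real.log (p' x / q x))]
      have hterm : ∀ (y : Psp d α) (z : Psp d β),
          (if compat d y z then p' (glue d hunion y z) *
              Real.log (p' (glue d hunion y z) / q (glue d hunion y z)) else 0)
          = (v y * Real.log (v y / A y)
                / margF d (α ∩ β) p (resSub d Finset.inter_subset_left y)) *
              (if compat d y z then w z else 0)
            + (w z * Real.log (w z / B z)
                / margF d (α ∩ β) p (resSub d Finset.inter_subset_right z)) *
              (if compat d y z then v y else 0)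
            - (v y * Real.log (margF d (α ∩ β) p (resSub d Finset.inter_subset_left y))
                / margF d (α ∩ β) p (resSub d Finset.inter_subset_left y)) *
              (if compat d y z then w z else 0) := by
        intro y z
        by_cases hc : compat d y z
        · rw [if_pos hc, if_pos hc, if_pos hc, hp'glue y z hc]
          have hfg : q (glue d hunion y z) = A y * B z := by
            rw [hfac, resTo_glue_left d hunion, resTo_glue_right d hunion hc]
          rw [hfg]
          have hsz : resSub d Finset.inter_subset_right z
              = resSub d Finset.inter_subset_left y := Eq.symm hc
          rw [hsz]
          rcases (hvsimp.1 y).lt_or_eq with hv | hv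
          swap
          · rw [← hv]; simp
          rcases (hwsimp.1 z).lt_or_eq with hw | hw
          swap
          · rw [← hw]; simp
          have hA := sup1 y hv
          have hB := sup2 z hw
          have hps := hpS (resSub d Finset.inter_subset_left y)
          have hlog : Real.log (v y * w z
                / margF d (α ∩ β) p (resSub d Finset.inter_subset_left y) / (A y * B z))
              = Real.log (v y) + Real.log (w z)
                - Real.log (margF d (α ∩ β) p (resSub d Finset.inter_subset_left y))
                - (Real.log (A y) + Real.log (B z)) := by
            rw [Real.log_div (by positivity) (by positivity),
              Real.log_div (by positivity) (by positivity),
              Real.log_mul (by positivity) (by positivity),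
              Real.log_mul (by positivity) (by positivity)]
          rw [hlog, Real.log_div (ne_of_gt hv) (ne_of_gt hA),
            Real.log_div (ne_of_gt hw) (ne_of_gt hB)]
          field_simp
          ring
        · simp [hc]
      rw [Finset.sum_congr rfl fun y _ => Finset.sum_congr rfl fun z _ => hterm y z]
      have hsplitsum : ∀ (y : Psp d α),
          (∑ z, ((v y * Real.log (v y / A y)
                / margF d (α ∩ β) p (resSub d Finset.inter_subset_left y)) *
              (if compat d y z then w z else 0)
            + (w z * Real.log (w z / B z)
                / margF d (α ∩ β) p (resSub d Finset.inter_subset_right z)) *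
              (if compat d y z then v y else 0)
            - (v y * Real.log (margF d (α ∩ β) p (resSub d Finset.inter_subset_left y))
                / margF d (α ∩ β) p (resSub d Finset.inter_subset_left y)) *
              (if compat d y z then w z else 0)))
          = (∑ z, (v y * Real.log (v y / A y)
                / margF d (α ∩ β) p (resSub d Finset.inter_subset_left y)) *
              (if compat d y z then w z else 0))
            + (∑ z, (w z * Real.log (w z / B z)
                / margF d (α ∩ β) p (resSub d Finset.inter_subset_right z)) *
              (if compat d y z then v y else 0))
            - (∑ z, (v y * Real.log (margF d (α ∩ β) p (resSub d Finset.inter_subset_left y))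
                / margF d (α ∩ β) p (resSub d Finset.inter_subset_left y)) *
              (if compat d y z then w z else 0)) := by
        intro y
        rw [Finset.sum_sub_distrib, Finset.sum_add_distrib]
      rw [Finset.sum_congr rfl fun y _ => hsplitsum y]
      rw [Finset.sum_sub_distrib, Finset.sum_add_distrib]
      have hS1 : (∑ y, ∑ z, (v y * Real.log (v y / A y)
            / margF d (α ∩ β) p (resSub d Finset.inter_subset_left y)) *
          (if compat d y z then w z else 0)) = ∑ y, v y * Real.log (v y / A y) := by
        refine Finset.sum_congr rfl fun y _ => ?_
        rw [← Finset.mul_sum, hcompatw y]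
        exact div_mul_cancel₀ _ (ne_of_gt (hpS _))
      have hS2 : (∑ y, ∑ z, (w z * Real.log (w z / B z)
            / margF d (α ∩ β) p (resSub d Finset.inter_subset_right z)) *
          (if compat d y z then v y else 0)) = ∑ z, w z * Real.log (w z / B z) := by
        rw [Finset.sum_comm]
        refine Finset.sum_congr rfl fun z _ => ?_
        rw [← Finset.mul_sum, hcompatv z]
        exact div_mul_cancel₀ _ (ne_of_gt (hpS _))
      have hS3 : (∑ y, ∑ z, (v y * Real.log (margF d (α ∩ β) p
              (resSub d Finset.inter_subset_left y))
            / margF d (α ∩ β) p (resSub d Finset.inter_subset_left y)) *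
          (if compat d y z then w z else 0))
          = ∑ s, margF d (α ∩ β) p s * Real.log (margF d (α ∩ β) p s) := by
        have h1 : ∀ y : Psp d α, (∑ z, (v y * Real.log (margF d (α ∩ β) p
              (resSub d Finset.inter_subset_left y))
            / margF d (α ∩ β) p (resSub d Finset.inter_subset_left y)) *
          (if compat d y z then w z else 0))
            = v y * Real.log (margF d (α ∩ β) p (resSub d Finset.inter_subset_left y)) := by
          intro y
          rw [← Finset.mul_sum, hcompatw y]
          exact div_mul_cancel₀ _ (ne_of_gt (hpS _))
        rw [Finset.sum_congr rfl fun y _ => h1 y]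
        exact hcolv (fun s => Real.log (margF d (α ∩ β) p s))
      rw [hS1, hS2, hS3]
    -- assemble in EReal
    have hd1 : divFrom (closure (hierModelSub d α (𝓕.filter (· ⊆ α))
          (fun F hF => (Finset.mem_filter.mp hF).2))) v
        ≤ (((∑ y, v y * Real.log (v y /
            (margF d α q y * gtilt (resSub d Finset.inter_subset_left y)))) : ℝ) : EReal) := by
      rw [← hKLα]
      exact iInf₂_le _ hmemα
    have hd2 : divFrom (closure (hierModelSub d β (𝓕.filter (· ⊆ β))
          (fun F hF => (Finset.mem_filter.mp hF).2))) w
        ≤ (((∑ z, w z * Real.log (w z /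
            (margF d β q z * gtilt (resSub d Finset.inter_subset_right z)))) : ℝ) : EReal) := by
      rw [← hKLβ]
      exact iInf₂_le _ hmemβ
    rw [hKLp]
    refine le_trans (add_le_add hd1 hd2) ?_
    rw [← EReal.coe_add]
    rw [EReal.coe_le_coe_iff]
    rw [hrealα, hrealβ, hrealmain]
    linarith [hGibbs, hCorr]
  rw [← hvmax, ← hwmax]
  have hle1 : divFrom (closure (hierModelSub d α (𝓕.filter (· ⊆ α))
        (fun F hF => (Finset.mem_filter.mp hF).2))) v +
      divFrom (closure (hierModelSub d β (𝓕.filter (· ⊆ β))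
        (fun F hF => (Finset.mem_filter.mp hF).2))) w ≤
      divFrom (closure (hierModel d 𝓕)) p' := le_iInf₂ hbound
  exact hle1.trans (le_iSup₂
    (f := fun u (_ : u ∈ simplex (∀ i, Fin (d i))) => divFrom (closure (hierModel d 𝓕)) u)
    p' hp'mem)
end

section
/- Let m ≥ 2, let d_1,…,d_m ≥ 1, let R = [d_1]×⋯×[d_m], and let M = {p ∈ Δ_R : p_x = ∏_{i=1}^m θ_i(x_i) for some probability vectors θ_i on [d_i]} be the independence model of m discrete random variables. Then sup_{p∈Δ_R} inf_{q∈M} D(p‖q) ≤ (Σ_{i=1}^m log d_i) − log(max_i d_i); equivalently, if d_1 ≤ d_2 ≤ ⋯ ≤ d_m, the maximum divergence from M is at most log d_1 + ⋯ + log d_{m−1}. -/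
open scoped BigOperators Pointwise

attribute [local instance] Classical.propDecidable

/-- the maximum divergence from the independence model of `m` discrete random
variables with state sizes `d_1,…,d_m` is at most `(Σ_i log d_i) − log(max_i d_i)`. -/
theorem stmt16 {m : ℕ} (hm : 2 ≤ m) (d : Fin m → ℕ) (hd : ∀ i, 1 ≤ d i)
    (M : Set ((∀ i, Fin (d i)) → ℝ))
    (hM : M = {p | p ∈ simplex (∀ i, Fin (d i)) ∧ ∃ θ : ∀ i, Fin (d i) → ℝ,
        (∀ i, θ i ∈ simplex (Fin (d i))) ∧ ∀ x, p x = ∏ i, θ i (x i)}) :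
    (⨆ p ∈ simplex (∀ i, Fin (d i)), divFrom M p)
      ≤ (((∑ i, Real.log (d i)) - Real.log ((Finset.univ.sup d : ℕ) : ℝ) : ℝ) : EReal) := by
  classical
  apply iSup₂_le
  intro p hp
  obtain ⟨hp0, hp1⟩ := hp
  have hne : (Finset.univ : Finset (Fin m)).Nonempty :=
    ⟨⟨0, by omega⟩, Finset.mem_univ _⟩
  obtain ⟨i₀, -, hi₀⟩ := Finset.exists_mem_eq_sup Finset.univ hne d
  -- the marginal of p on coordinate i₀
  set margin : Fin (d i₀) → ℝ :=
    fun a => ∑ x ∈ Finset.univ.filter (fun x => x i₀ = a), p x with hmargin_def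
  have hmargin_nonneg : ∀ a, 0 ≤ margin a := fun a =>
    Finset.sum_nonneg fun x _ => hp0 x
  have hmargin_sum : ∑ a, margin a = 1 := by
    rw [hmargin_def, Finset.sum_fiberwise, hp1]
  have hp_le_margin : ∀ x, p x ≤ margin (x i₀) := by
    intro x
    exact Finset.single_le_sum (fun y _ => hp0 y)
      (Finset.mem_filter.mpr ⟨Finset.mem_univ _, rfl⟩)
  -- θ : uniform on coordinates ≠ i₀, marginal on i₀
  set θ : ∀ i, Fin (d i) → ℝ :=
    Function.update (fun i (_ : Fin (d i)) => ((d i : ℝ))⁻¹) i₀ margin with hθ_def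
  have hθi₀ : θ i₀ = margin := Function.update_self _ _ _
  have hθne : ∀ i, i ≠ i₀ → θ i = fun _ => ((d i : ℝ))⁻¹ := fun i hi =>
    Function.update_of_ne hi _ _
  have hdpos : ∀ i, (0 : ℝ) < d i := fun i => by
    have := hd i; exact_mod_cast Nat.lt_of_lt_of_le Nat.zero_lt_one this
  have hθ_simplex : ∀ i, θ i ∈ simplex (Fin (d i)) := by
    intro i
    by_cases hi : i = i₀
    · subst hi
      rw [hθi₀]
      exact ⟨hmargin_nonneg, hmargin_sum⟩
    · rw [hθne i hi]
      constructor
      · intro _; positivity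
      · have hne0 : (d i : ℝ) ≠ 0 := (hdpos i).ne'
        rw [Finset.sum_const, Finset.card_univ, Fintype.card_fin, nsmul_eq_mul,
          mul_inv_cancel₀ hne0]
  set q : (∀ i, Fin (d i)) → ℝ := fun x => ∏ i, θ i (x i) with hq_def
  have hq_nonneg : ∀ x, 0 ≤ q x := fun x =>
    Finset.prod_nonneg fun i _ => (hθ_simplex i).1 (x i)
  have hq_sum : ∑ x, q x = 1 := by
    rw [hq_def]
    rw [show (∑ x : (∀ i, Fin (d i)), ∏ i, θ i (x i)) = ∏ i, ∑ a, θ i a by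
      rw [Finset.prod_univ_sum, Fintype.piFinset_univ]]
    exact Finset.prod_eq_one fun i _ => (hθ_simplex i).2
  have hqM : q ∈ M := by
    rw [hM]
    exact ⟨⟨hq_nonneg, hq_sum⟩, θ, hθ_simplex, fun x => rfl⟩
  set c : ℝ := ∏ i ∈ Finset.univ.erase i₀, ((d i : ℝ))⁻¹ with hc_def
  have hc_pos : 0 < c := Finset.prod_pos fun i _ => by
    have := hdpos i; positivity
  have hq_eq : ∀ x, q x = margin (x i₀) * c := by
    intro x
    show (∏ i, θ i (x i)) = _
    rw [← Finset.mul_prod_erase Finset.univ _ (Finset.mem_univ i₀), hθi₀]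
    congr 1
    exact Finset.prod_congr rfl fun i hi => by
      rw [hθne i (Finset.ne_of_mem_erase hi)]
  have hsupp : ∀ x, q x = 0 → p x = 0 := by
    intro x hx
    rw [hq_eq] at hx
    have hm0 : margin (x i₀) = 0 := by
      rcases mul_eq_zero.mp hx with h | h
      · exact h
      · exact absurd h (ne_of_gt hc_pos)
    have := hp_le_margin x
    rw [hm0] at this
    exact le_antisymm this (hp0 x)
  -- the log of c
  have hlogc : Real.log c = -∑ i ∈ Finset.univ.erase i₀, Real.log (d i) := by
    rw [hc_def, Real.log_prod (fun i _ => by have := hdpos i; positivity)]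
    rw [← Finset.sum_neg_distrib]
    exact Finset.sum_congr rfl fun i _ => Real.log_inv _
  set L : ℝ := ∑ i ∈ Finset.univ.erase i₀, Real.log (d i) with hL_def
  have hL_eq : L = (∑ i, Real.log (d i)) - Real.log ((Finset.univ.sup d : ℕ) : ℝ) := by
    rw [hL_def, hi₀]
    rw [← Finset.add_sum_erase Finset.univ (fun i => Real.log (d i)) (Finset.mem_univ i₀)]
    ring
  -- the KL bound
  have hterm : ∀ x, p x * Real.log (p x / q x) ≤ p x * L := by
    intro x
    rcases eq_or_lt_of_le (hp0 x) with h | h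
    · rw [← h]; simp
    · have hmpos : 0 < margin (x i₀) := lt_of_lt_of_le h (hp_le_margin x)
      have hqpos : 0 < q x := by rw [hq_eq]; positivity
      apply mul_le_mul_of_nonneg_left _ (hp0 x)
      have hcne : c ≠ 0 := hc_pos.ne'
      have h1 : p x / q x ≤ c⁻¹ := by
        rw [hq_eq x, div_le_iff₀ (by positivity)]
        calc p x ≤ margin (x i₀) := hp_le_margin x
          _ = c⁻¹ * (margin (x i₀) * c) := by field_simp
      calc Real.log (p x / q x) ≤ Real.log c⁻¹ :=
            Real.log_le_log (by positivity) h1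
        _ = L := by rw [Real.log_inv, hlogc]; ring
  have hKL : KL p q ≤ ((L : ℝ) : EReal) := by
    rw [KL, if_pos hsupp]
    apply EReal.coe_le_coe_iff.mpr
    calc ∑ x, p x * Real.log (p x / q x) ≤ ∑ x, p x * L :=
          Finset.sum_le_sum fun x _ => hterm x
      _ = L := by rw [← Finset.sum_mul, hp1, one_mul]
  calc divFrom M p ≤ KL p q := iInf₂_le q hqM
    _ ≤ ((L : ℝ) : EReal) := hKL
    _ = _ := by rw [hL_eq]
end

section
/- Let d_1, d_2, d_3 ≥ 1, let R = [d_1]×[d_2]×[d_3], and let M = {p ∈ Δ_R : there exist strictly positive functions a : [d_1]×[d_2] → ℝ_{>0} and b : [d_2]×[d_3] → ℝ_{>0} with p_{ijk} = a(i,j)·b(j,k) for all (i,j,k)} be the conditional independence model X_1 ⫫ X_3 | X_2 (the hierarchical model of the simplicial complex [12][23]). Then sup_{p∈Δ_R} inf_{q ∈ closure(M)} D(p‖q) = min(log d_1, log d_3). -/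
open scoped BigOperators Pointwise

attribute [local instance] Classical.propDecidable

/-! ### Auxiliary lemmas -/

/-- AM-GM: the product of `n` nonnegative reals is at most the `n`-th power of their mean. -/
lemma amgm {n : ℕ} (hn : 0 < n) (z : Fin n → ℝ) (hz : ∀ i, 0 ≤ z i) :
    ∏ i, z i ≤ ((∑ i, z i) / n) ^ n := by
  have hn' : (0:ℝ) < n := Nat.cast_pos.mpr hn
  have key := Real.geom_mean_le_arith_mean_weighted Finset.univ
      (fun _ => (n:ℝ)⁻¹) z (fun i _ => by positivity)
      (by simp [Finset.card_univ]; field_simp) (fun i _ => hz i)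
  have h1 : ∏ i, z i ^ ((n:ℝ)⁻¹) = (∏ i, z i) ^ ((n:ℝ)⁻¹) :=
    Real.finset_prod_rpow Finset.univ z (fun i _ => hz i) _
  have h2 : ∑ i, (n:ℝ)⁻¹ * z i = (∑ i, z i) / n := by
    rw [← Finset.mul_sum]; ring
  rw [h1, h2] at key
  have h3 : (((∏ i, z i) ^ ((n:ℝ)⁻¹)) : ℝ) ^ (n:ℕ) = ∏ i, z i := by
    rw [← Real.rpow_natCast (((∏ i, z i) ^ ((n:ℝ)⁻¹))) n, ← Real.rpow_mul
      (Finset.prod_nonneg fun i _ => hz i), inv_mul_cancel₀ (by positivity), Real.rpow_one]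
  calc ∏ i, z i = (((∏ i, z i) ^ ((n:ℝ)⁻¹)) : ℝ) ^ (n:ℕ) := h3.symm
    _ ≤ ((∑ i, z i) / n) ^ n :=
        pow_le_pow_left₀ (Real.rpow_nonneg (Finset.prod_nonneg fun i _ => hz i) _) key n

lemma isClosed_simplex (ι : Type*) [Fintype ι] : IsClosed (simplex ι) := by
  have : simplex ι = (⋂ i, {p : ι → ℝ | 0 ≤ p i}) ∩ {p | ∑ i, p i = 1} := by
    ext p; simp [simplex, Set.mem_iInter]
  rw [this]
  exact ((isClosed_iInter fun i => isClosed_le continuous_const (continuous_apply i))).inter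
    (isClosed_eq (continuous_finset_sum _ fun i _ => continuous_apply i) continuous_const)

lemma KL_le_log {ι : Type*} [Fintype ι] (p q : ι → ℝ) (c : ℝ)
    (hp : ∀ i, 0 ≤ p i) (hsum : ∑ i, p i = 1) (hq : ∀ i, 0 ≤ q i)
    (hratio : ∀ i, 0 < p i → p i ≤ c * q i) :
    KL p q ≤ ((Real.log c : ℝ) : EReal) := by
  have hq0 : ∀ i, q i = 0 → p i = 0 := by
    intro i hqi
    by_contra h
    have hpi : 0 < p i := lt_of_le_of_ne (hp i) (Ne.symm h)
    have := hratio i hpi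
    rw [hqi, mul_zero] at this
    linarith
  rw [KL, if_pos hq0, EReal.coe_le_coe_iff]
  calc ∑ i, p i * Real.log (p i / q i) ≤ ∑ i, p i * Real.log c := by
        refine Finset.sum_le_sum fun i _ => ?_
        rcases eq_or_lt_of_le (hp i) with h | h
        · simp [← h]
        · have hqi : 0 < q i := by
            rcases eq_or_lt_of_le (hq i) with h' | h'
            · exact absurd (hq0 i h'.symm) (ne_of_gt h)
            · exact h'
          refine mul_le_mul_of_nonneg_left ?_ (hp i)
          refine Real.log_le_log (by positivity) ?_
          rw [div_le_iff₀ hqi]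
          have := hratio i h
          linarith [mul_comm c (q i)]
    _ = Real.log c := by rw [← Finset.sum_mul, hsum, one_mul]

section closure_mem
variable {d₁ d₂ d₃ : ℕ} (h₁ : 1 ≤ d₁) (h₂ : 1 ≤ d₂) (h₃ : 1 ≤ d₃)
    (M : Set ((Fin d₁ × Fin d₂ × Fin d₃) → ℝ))
    (hM : M = {p | p ∈ simplex (Fin d₁ × Fin d₂ × Fin d₃) ∧
        ∃ (a : Fin d₁ × Fin d₂ → ℝ) (b : Fin d₂ × Fin d₃ → ℝ),
          (∀ ij, 0 < a ij) ∧ (∀ jk, 0 < b jk) ∧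
          ∀ x : Fin d₁ × Fin d₂ × Fin d₃, p x = a (x.1, x.2.1) * b (x.2.1, x.2.2)})

include h₁ h₂ h₃ hM in
lemma mem_closure_left (a : Fin d₁ × Fin d₂ → ℝ) (b : Fin d₂ × Fin d₃ → ℝ)
    (ha : ∀ ij, 0 ≤ a ij) (hb : ∀ jk, 0 < b jk)
    (hsum : ∑ x : Fin d₁ × Fin d₂ × Fin d₃, a (x.1, x.2.1) * b (x.2.1, x.2.2) = 1) :
    (fun x : Fin d₁ × Fin d₂ × Fin d₃ => a (x.1, x.2.1) * b (x.2.1, x.2.2)) ∈ closure M := by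
  haveI : NeZero d₁ := ⟨by omega⟩
  haveI : NeZero d₂ := ⟨by omega⟩
  haveI : NeZero d₃ := ⟨by omega⟩
  set T : ℝ := ∑ x : Fin d₁ × Fin d₂ × Fin d₃, b (x.2.1, x.2.2) with hT
  have hTpos : 0 < T := Finset.sum_pos (fun x _ => hb _) ⟨(0,0,0), Finset.mem_univ _⟩
  set ε : ℕ → ℝ := fun n => ((n:ℝ) + 1)⁻¹ with hε
  have hεpos : ∀ n, 0 < ε n := fun n => by positivity
  have hεle : ∀ n, ε n ≤ 1 := fun n => by
    rw [hε]; simp only []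
    rw [inv_le_one_iff₀]; right; linarith [Nat.cast_nonneg (α := ℝ) n]
  have hεtend : Filter.Tendsto ε Filter.atTop (nhds 0) := by
    simpa [hε, one_div] using tendsto_one_div_add_atTop_nhds_zero_nat (𝕜 := ℝ)
  set f : ℕ → (Fin d₁ × Fin d₂ × Fin d₃) → ℝ := fun n x =>
    ((1 - ε n) * a (x.1, x.2.1) + ε n * T⁻¹) * b (x.2.1, x.2.2) with hf
  have hmem : ∀ n, f n ∈ M := by
    intro n
    rw [hM]
    refine ⟨⟨fun x => ?_, ?_⟩, fun ij => (1 - ε n) * a ij + ε n * T⁻¹, b, fun ij => ?_, hb,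
      fun x => rfl⟩
    · have := hεle n; have := hεpos n; have := ha (x.1, x.2.1); have := hb (x.2.1, x.2.2)
      have h1 : (0:ℝ) ≤ 1 - ε n := by linarith
      positivity
    · have : ∀ x : Fin d₁ × Fin d₂ × Fin d₃,
          f n x = (1 - ε n) * (a (x.1, x.2.1) * b (x.2.1, x.2.2))
            + ε n * T⁻¹ * b (x.2.1, x.2.2) := fun x => by rw [hf]; ring
      rw [Finset.sum_congr rfl fun x _ => this x, Finset.sum_add_distrib,
        ← Finset.mul_sum, ← Finset.mul_sum, hsum, ← hT, mul_one,
        mul_assoc, inv_mul_cancel₀ (ne_of_gt hTpos), mul_one]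
      ring
    · have := hεle n; have := hεpos n; have := ha ij
      have h1 : (0:ℝ) ≤ 1 - ε n := by linarith
      positivity
  have htend : Filter.Tendsto f Filter.atTop
      (nhds (fun x : Fin d₁ × Fin d₂ × Fin d₃ => a (x.1, x.2.1) * b (x.2.1, x.2.2))) := by
    rw [tendsto_pi_nhds]
    intro x
    have : Filter.Tendsto (fun n => ((1 - ε n) * a (x.1, x.2.1) + ε n * T⁻¹) * b (x.2.1, x.2.2))
        Filter.atTop (nhds (((1 - 0) * a (x.1, x.2.1) + 0 * T⁻¹) * b (x.2.1, x.2.2))) :=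
      (((tendsto_const_nhds.sub hεtend).mul tendsto_const_nhds).add
        (hεtend.mul tendsto_const_nhds)).mul tendsto_const_nhds
    simpa using this
  exact mem_closure_of_tendsto htend (Filter.Eventually.of_forall hmem)

include h₁ h₂ h₃ hM in
lemma mem_closure_right (a : Fin d₁ × Fin d₂ → ℝ) (b : Fin d₂ × Fin d₃ → ℝ)
    (ha : ∀ ij, 0 < a ij) (hb : ∀ jk, 0 ≤ b jk)
    (hsum : ∑ x : Fin d₁ × Fin d₂ × Fin d₃, a (x.1, x.2.1) * b (x.2.1, x.2.2) = 1) :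
    (fun x : Fin d₁ × Fin d₂ × Fin d₃ => a (x.1, x.2.1) * b (x.2.1, x.2.2)) ∈ closure M := by
  haveI : NeZero d₁ := ⟨by omega⟩
  haveI : NeZero d₂ := ⟨by omega⟩
  haveI : NeZero d₃ := ⟨by omega⟩
  set T : ℝ := ∑ x : Fin d₁ × Fin d₂ × Fin d₃, a (x.1, x.2.1) with hT
  have hTpos : 0 < T := Finset.sum_pos (fun x _ => ha _) ⟨(0,0,0), Finset.mem_univ _⟩
  set ε : ℕ → ℝ := fun n => ((n:ℝ) + 1)⁻¹ with hε
  have hεpos : ∀ n, 0 < ε n := fun n => by positivity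
  have hεle : ∀ n, ε n ≤ 1 := fun n => by
    rw [hε]; simp only []
    rw [inv_le_one_iff₀]; right; linarith [Nat.cast_nonneg (α := ℝ) n]
  have hεtend : Filter.Tendsto ε Filter.atTop (nhds 0) := by
    simpa [hε, one_div] using tendsto_one_div_add_atTop_nhds_zero_nat (𝕜 := ℝ)
  set f : ℕ → (Fin d₁ × Fin d₂ × Fin d₃) → ℝ := fun n x =>
    a (x.1, x.2.1) * ((1 - ε n) * b (x.2.1, x.2.2) + ε n * T⁻¹) with hf
  have hmem : ∀ n, f n ∈ M := by
    intro n
    rw [hM]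
    refine ⟨⟨fun x => ?_, ?_⟩, a, fun jk => (1 - ε n) * b jk + ε n * T⁻¹, ha, fun jk => ?_,
      fun x => rfl⟩
    · have := hεle n; have := hεpos n; have := hb (x.2.1, x.2.2); have := ha (x.1, x.2.1)
      have h1 : (0:ℝ) ≤ 1 - ε n := by linarith
      positivity
    · have : ∀ x : Fin d₁ × Fin d₂ × Fin d₃,
          f n x = (1 - ε n) * (a (x.1, x.2.1) * b (x.2.1, x.2.2))
            + ε n * T⁻¹ * a (x.1, x.2.1) := fun x => by rw [hf]; ring
      rw [Finset.sum_congr rfl fun x _ => this x, Finset.sum_add_distrib,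
        ← Finset.mul_sum, ← Finset.mul_sum, hsum, ← hT, mul_one,
        mul_assoc, inv_mul_cancel₀ (ne_of_gt hTpos), mul_one]
      ring
    · have := hεle n; have := hεpos n; have := hb jk
      have h1 : (0:ℝ) ≤ 1 - ε n := by linarith
      positivity
  have htend : Filter.Tendsto f Filter.atTop
      (nhds (fun x : Fin d₁ × Fin d₂ × Fin d₃ => a (x.1, x.2.1) * b (x.2.1, x.2.2))) := by
    rw [tendsto_pi_nhds]
    intro x
    have : Filter.Tendsto (fun n => a (x.1, x.2.1) * ((1 - ε n) * b (x.2.1, x.2.2) + ε n * T⁻¹))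
        Filter.atTop (nhds (a (x.1, x.2.1) * ((1 - 0) * b (x.2.1, x.2.2) + 0 * T⁻¹))) :=
      tendsto_const_nhds.mul (((tendsto_const_nhds.sub hεtend).mul tendsto_const_nhds).add
        (hεtend.mul tendsto_const_nhds))
    simpa using this
  exact mem_closure_of_tendsto htend (Filter.Eventually.of_forall hmem)

end closure_mem


lemma sum_slice3 (d₁ d₂ d₃ : ℕ) (p : Fin d₁ × Fin d₂ × Fin d₃ → ℝ)
    (hp1 : ∑ x, p x = 1) (hd₃ : (0:ℝ) < d₃) :
    ∑ x : Fin d₁ × Fin d₂ × Fin d₃, (∑ k, p (x.1, x.2.1, k)) * (d₃:ℝ)⁻¹ = 1 := by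
  have step : ∀ i : Fin d₁, ∑ y : Fin d₂ × Fin d₃, (∑ k, p (i, y.1, k)) * (d₃:ℝ)⁻¹
      = ∑ j : Fin d₂, (d₃:ℝ) * ((∑ k, p (i, j, k)) * (d₃:ℝ)⁻¹) := by
    intro i
    rw [Fintype.sum_prod_type]
    exact Finset.sum_congr rfl fun j _ => by
      simp only [Finset.sum_const, Finset.card_univ, Fintype.card_fin, nsmul_eq_mul]
  rw [Fintype.sum_prod_type, Finset.sum_congr rfl fun i _ => step i]
  have : ∀ (i : Fin d₁) (j : Fin d₂),
      (d₃:ℝ) * ((∑ k, p (i, j, k)) * (d₃:ℝ)⁻¹) = ∑ k, p (i, j, k) := by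
    intro i j; field_simp
  rw [Finset.sum_congr rfl fun i _ => Finset.sum_congr rfl fun j _ => this i j]
  rw [← hp1, Fintype.sum_prod_type]
  exact Finset.sum_congr rfl fun i _ =>
    (Fintype.sum_prod_type (fun y : Fin d₂ × Fin d₃ => p (i, y))).symm

lemma sum_slice1 (d₁ d₂ d₃ : ℕ) (p : Fin d₁ × Fin d₂ × Fin d₃ → ℝ)
    (hp1 : ∑ x, p x = 1) (hd₁ : (0:ℝ) < d₁) :
    ∑ x : Fin d₁ × Fin d₂ × Fin d₃, (d₁:ℝ)⁻¹ * (∑ i, p (i, x.2.1, x.2.2)) = 1 := by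
  rw [Fintype.sum_prod_type]
  have step : ∀ i : Fin d₁, ∑ y : Fin d₂ × Fin d₃, (d₁:ℝ)⁻¹ * (∑ i', p (i', y.1, y.2))
      = (d₁:ℝ)⁻¹ := by
    intro i
    rw [← Finset.mul_sum]
    have : ∑ y : Fin d₂ × Fin d₃, (∑ i', p (i', y.1, y.2)) = 1 := by
      rw [Finset.sum_comm, ← hp1, Fintype.sum_prod_type]
    rw [this, mul_one]
  rw [Finset.sum_congr rfl fun i _ => step i, Finset.sum_const, Finset.card_univ,
    Fintype.card_fin, nsmul_eq_mul]
  field_simp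

/-- the maximum divergence from the conditional independence model
`X₁ ⫫ X₃ | X₂` (the hierarchical model of `[12][23]`) equals `min(log d₁, log d₃)`. -/
theorem stmt17 (d₁ d₂ d₃ : ℕ) (h₁ : 1 ≤ d₁) (h₂ : 1 ≤ d₂) (h₃ : 1 ≤ d₃)
    (M : Set ((Fin d₁ × Fin d₂ × Fin d₃) → ℝ))
    (hM : M = {p | p ∈ simplex (Fin d₁ × Fin d₂ × Fin d₃) ∧
        ∃ (a : Fin d₁ × Fin d₂ → ℝ) (b : Fin d₂ × Fin d₃ → ℝ),
          (∀ ij, 0 < a ij) ∧ (∀ jk, 0 < b jk) ∧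
          ∀ x : Fin d₁ × Fin d₂ × Fin d₃, p x = a (x.1, x.2.1) * b (x.2.1, x.2.2)}) :
    (⨆ p ∈ simplex (Fin d₁ × Fin d₂ × Fin d₃), divFrom (closure M) p)
      = ((min (Real.log (d₁ : ℝ)) (Real.log (d₃ : ℝ)) : ℝ) : EReal) := by
  haveI : NeZero d₂ := ⟨by omega⟩
  have hd₁ : (0:ℝ) < d₁ := by exact_mod_cast h₁
  have hd₃ : (0:ℝ) < d₃ := by exact_mod_cast h₃
  have hub : ∀ p ∈ simplex (Fin d₁ × Fin d₂ × Fin d₃),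
      divFrom (closure M) p ≤ ((min (Real.log (d₁:ℝ)) (Real.log (d₃:ℝ)) : ℝ) : EReal) := by
    intro p hp
    obtain ⟨hp0, hp1⟩ := hp
    have hcoe : ((min (Real.log (d₁:ℝ)) (Real.log (d₃:ℝ)) : ℝ) : EReal)
        = min ((Real.log (d₁:ℝ) : ℝ) : EReal) ((Real.log (d₃:ℝ) : ℝ) : EReal) :=
      EReal.coe_strictMono.monotone.map_min
    rw [hcoe, le_min_iff]
    constructor
    · -- uniform first coordinate
      set a : Fin d₁ × Fin d₂ → ℝ := fun _ => (d₁:ℝ)⁻¹ with hA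
      set b : Fin d₂ × Fin d₃ → ℝ := fun jk => ∑ i, p (i, jk.1, jk.2) with hB
      have hbsum : ∑ x : Fin d₁ × Fin d₂ × Fin d₃, a (x.1, x.2.1) * b (x.2.1, x.2.2) = 1 :=
        sum_slice1 d₁ d₂ d₃ p hp1 hd₁
      have hq₁ : (fun x : Fin d₁ × Fin d₂ × Fin d₃ => a (x.1, x.2.1) * b (x.2.1, x.2.2))
          ∈ closure M :=
        mem_closure_right h₁ h₂ h₃ M hM a b (fun _ => by positivity)
          (fun jk => Finset.sum_nonneg fun i _ => hp0 _) hbsum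
      have hKL : KL p (fun x : Fin d₁ × Fin d₂ × Fin d₃ => a (x.1, x.2.1) * b (x.2.1, x.2.2))
          ≤ ((Real.log (d₁:ℝ) : ℝ) : EReal) := by
        refine KL_le_log p _ (d₁:ℝ) hp0 hp1
          (fun x => mul_nonneg (by positivity) (Finset.sum_nonneg fun i _ => hp0 _)) ?_
        intro x _
        have h1 : p x ≤ ∑ i, p (i, x.2.1, x.2.2) :=
          Finset.single_le_sum (f := fun i => p (i, x.2.1, x.2.2))
            (fun i _ => hp0 _) (Finset.mem_univ x.1)
        have h2 : (d₁:ℝ) * (a (x.1, x.2.1) * b (x.2.1, x.2.2))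
            = ∑ i, p (i, x.2.1, x.2.2) := by
          rw [hA, hB]; field_simp
        rw [h2]; exact h1
      exact (iInf₂_le _ hq₁).trans hKL
    · set a : Fin d₁ × Fin d₂ → ℝ := fun ij => ∑ k, p (ij.1, ij.2, k) with hA
      set b : Fin d₂ × Fin d₃ → ℝ := fun _ => (d₃:ℝ)⁻¹ with hB
      have hasum : ∑ x : Fin d₁ × Fin d₂ × Fin d₃, a (x.1, x.2.1) * b (x.2.1, x.2.2) = 1 :=
        sum_slice3 d₁ d₂ d₃ p hp1 hd₃
      have hq₃ : (fun x : Fin d₁ × Fin d₂ × Fin d₃ => a (x.1, x.2.1) * b (x.2.1, x.2.2))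
          ∈ closure M :=
        mem_closure_left h₁ h₂ h₃ M hM a b
          (fun ij => Finset.sum_nonneg fun k _ => hp0 _) (fun _ => by positivity) hasum
      have hKL : KL p (fun x : Fin d₁ × Fin d₂ × Fin d₃ => a (x.1, x.2.1) * b (x.2.1, x.2.2))
          ≤ ((Real.log (d₃:ℝ) : ℝ) : EReal) := by
        refine KL_le_log p _ (d₃:ℝ) hp0 hp1
          (fun x => mul_nonneg (Finset.sum_nonneg fun k _ => hp0 _) (by positivity)) ?_
        intro x _
        have h1 : p x ≤ ∑ k, p (x.1, x.2.1, k) :=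
          Finset.single_le_sum (f := fun k => p (x.1, x.2.1, k))
            (fun k _ => hp0 _) (Finset.mem_univ x.2.2)
        have h2 : (d₃:ℝ) * (a (x.1, x.2.1) * b (x.2.1, x.2.2))
            = ∑ k, p (x.1, x.2.1, k) := by
          rw [hA, hB]; field_simp
        rw [h2]; exact h1
      exact (iInf₂_le _ hq₃).trans hKL
  -- Lower bound
  set d : ℕ := min d₁ d₃ with hdd
  have hd : 0 < d := by omega
  have hdR : (0:ℝ) < d := by exact_mod_cast hd
  set c₁ : Fin d → Fin d₁ := Fin.castLE (min_le_left d₁ d₃) with hc₁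
  set c₃ : Fin d → Fin d₃ := Fin.castLE (min_le_right d₁ d₃) with hc₃
  set e : Fin d → Fin d₁ × Fin d₂ × Fin d₃ := fun i => (c₁ i, 0, c₃ i) with he
  have he_inj : Function.Injective e := by
    intro i i' h
    have h1 : (c₁ i : ℕ) = (c₁ i' : ℕ) := congrArg (fun z => (z.1 : ℕ)) h
    simp only [hc₁, Fin.coe_castLE] at h1
    exact Fin.ext h1
  set pstar : (Fin d₁ × Fin d₂ × Fin d₃) → ℝ :=
    fun x => ∑ i : Fin d, if x = e i then (d:ℝ)⁻¹ else 0 with hpstar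
  have hpe : ∀ i, pstar (e i) = (d:ℝ)⁻¹ := by
    intro i
    simp only [hpstar]
    have h1 : ∀ i' : Fin d, (if e i = e i' then (d:ℝ)⁻¹ else 0)
        = if i = i' then (d:ℝ)⁻¹ else 0 := fun i' => by
      by_cases h : i = i' <;> simp [h, he_inj.eq_iff]
    rw [Finset.sum_congr rfl fun i' _ => h1 i', Finset.sum_ite_eq]
    simp
  have hps : pstar ∈ simplex (Fin d₁ × Fin d₂ × Fin d₃) := by
    constructor
    · intro x
      refine Finset.sum_nonneg fun i _ => ?_
      split
      · positivity
      · exact le_rfl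
    · simp only [hpstar]
      rw [Finset.sum_comm]
      have h1 : ∀ i : Fin d, ∑ x, (if x = e i then (d:ℝ)⁻¹ else 0) = (d:ℝ)⁻¹ := fun i => by
        rw [Finset.sum_ite_eq']; simp
      rw [Finset.sum_congr rfl fun i _ => h1 i, Finset.sum_const, Finset.card_univ,
        Fintype.card_fin, nsmul_eq_mul]
      field_simp
  set C : Set ((Fin d₁ × Fin d₂ × Fin d₃) → ℝ) :=
    {q | ∏ i : Fin d, q (e i) ≤ ((d:ℝ)^(2*d))⁻¹} with hC
  have hCclosed : IsClosed C :=
    isClosed_le (continuous_finset_prod _ fun i _ => continuous_apply (e i)) continuous_const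
  have hMC : M ⊆ C := by
    intro q hq
    rw [hM] at hq
    obtain ⟨⟨hq0, hq1⟩, a, b, ha, hb, hfac⟩ := hq
    set A : ℝ := ∑ i : Fin d, a (c₁ i, 0) with hAd
    set B : ℝ := ∑ i : Fin d, b (0, c₃ i) with hBd
    have hAnn : 0 ≤ A := Finset.sum_nonneg fun i _ => (ha _).le
    have hBnn : 0 ≤ B := Finset.sum_nonneg fun i _ => (hb _).le
    have hA : ∏ i : Fin d, a (c₁ i, 0) ≤ (A / d) ^ d :=
      amgm hd (fun i => a (c₁ i, 0)) (fun i => (ha _).le)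
    have hB : ∏ i : Fin d, b (0, c₃ i) ≤ (B / d) ^ d :=
      amgm hd (fun i => b (0, c₃ i)) (fun i => (hb _).le)
    have hAB : A * B ≤ 1 := by
      set emb : Fin d × Fin d → Fin d₁ × Fin d₂ × Fin d₃ :=
        fun z => (c₁ z.1, 0, c₃ z.2) with hemb
      have expand : A * B = ∑ z : Fin d × Fin d, q (emb z) := by
        rw [hAd, hBd, Finset.sum_mul_sum, Fintype.sum_prod_type]
        exact Finset.sum_congr rfl fun i _ => Finset.sum_congr rfl fun k _ =>
          (hfac (c₁ i, 0, c₃ k)).symm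
      have hembinj : ∀ z ∈ Finset.univ, ∀ z' ∈ Finset.univ,
          emb z = emb z' → z = z' := by
        intro z _ z' _ h
        have h1 : (c₁ z.1 : ℕ) = (c₁ z'.1 : ℕ) := congrArg (fun w => (w.1 : ℕ)) h
        have h3 : (c₃ z.2 : ℕ) = (c₃ z'.2 : ℕ) := congrArg (fun w => (w.2.2 : ℕ)) h
        simp only [hc₁, hc₃, Fin.coe_castLE] at h1 h3
        exact Prod.ext (Fin.ext h1) (Fin.ext h3)
      calc A * B = ∑ z : Fin d × Fin d, q (emb z) := expand
        _ = ∑ x ∈ Finset.univ.image emb, q x := (Finset.sum_image hembinj).symm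
        _ ≤ ∑ x, q x := Finset.sum_le_sum_of_subset_of_nonneg (Finset.subset_univ _)
            (fun x _ _ => hq0 x)
        _ = 1 := hq1
    have hprod : ∏ i : Fin d, q (e i)
        = (∏ i : Fin d, a (c₁ i, 0)) * ∏ i : Fin d, b (0, c₃ i) := by
      rw [← Finset.prod_mul_distrib]
      exact Finset.prod_congr rfl fun i _ => hfac (e i)
    show ∏ i : Fin d, q (e i) ≤ ((d:ℝ)^(2*d))⁻¹
    calc ∏ i : Fin d, q (e i) ≤ (A/d)^d * (B/d)^d := by
          rw [hprod]
          exact mul_le_mul hA hB (Finset.prod_nonneg fun i _ => (hb _).le)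
            (pow_nonneg (div_nonneg hAnn hdR.le) _)
      _ = ((A*B) / (d:ℝ)^2)^d := by rw [← mul_pow, div_mul_div_comm, sq]
      _ ≤ (1 / (d:ℝ)^2)^d := by gcongr
      _ = ((d:ℝ)^(2*d))⁻¹ := by rw [div_pow, one_pow, ← pow_mul, one_div]
  have hCsub : closure M ⊆ C := closure_minimal hMC hCclosed
  have hlow : ∀ q ∈ closure M, ((Real.log (d:ℝ) : ℝ) : EReal) ≤ KL pstar q := by
    intro q hq
    have hqs : q ∈ simplex (Fin d₁ × Fin d₂ × Fin d₃) :=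
      closure_minimal (show M ⊆ _ from by rw [hM]; exact fun p hp => hp.1)
        (isClosed_simplex _) hq
    by_cases hsupp : ∀ x, q x = 0 → pstar x = 0
    · have hqpos : ∀ i : Fin d, 0 < q (e i) := by
        intro i
        rcases eq_or_lt_of_le (hqs.1 (e i)) with h | h
        · exfalso
          have h0 := hsupp (e i) h.symm
          rw [hpe i] at h0
          exact (by positivity : (0:ℝ) < (d:ℝ)⁻¹).ne' h0
        · exact h
      have hppos : 0 < ∏ i : Fin d, q (e i) := Finset.prod_pos fun i _ => hqpos i
      have hple : ∏ i : Fin d, q (e i) ≤ ((d:ℝ)^(2*d))⁻¹ := hCsub hq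
      have hlogprod : Real.log (∏ i : Fin d, q (e i)) ≤ -(2 * (d:ℝ) * Real.log d) := by
        calc Real.log (∏ i : Fin d, q (e i)) ≤ Real.log (((d:ℝ)^(2*d))⁻¹) :=
              Real.log_le_log hppos hple
          _ = -Real.log ((d:ℝ)^(2*d)) := Real.log_inv _
          _ = -(2*(d:ℝ) * Real.log d) := by rw [Real.log_pow]; push_cast; ring
      have hsum_log : ∑ i : Fin d, Real.log (q (e i)) = Real.log (∏ i : Fin d, q (e i)) :=
        (Real.log_prod fun i _ => (hqpos i).ne').symm
      rw [KL, if_pos hsupp, EReal.coe_le_coe_iff]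
      have hS : ∑ x, pstar x * Real.log (pstar x / q x)
          = ∑ i : Fin d, (d:ℝ)⁻¹ * Real.log ((d:ℝ)⁻¹ / q (e i)) := by
        have hterm : ∀ x, pstar x * Real.log (pstar x / q x)
            = ∑ i : Fin d, if x = e i then (d:ℝ)⁻¹ * Real.log ((d:ℝ)⁻¹ / q (e i)) else 0 := by
          intro x
          by_cases hx : ∃ i, x = e i
          · obtain ⟨i, rfl⟩ := hx
            rw [hpe i]
            have h1 : ∀ i' : Fin d,
                (if e i = e i' then (d:ℝ)⁻¹ * Real.log ((d:ℝ)⁻¹ / q (e i')) else 0)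
                = if i = i' then (d:ℝ)⁻¹ * Real.log ((d:ℝ)⁻¹ / q (e i')) else 0 := fun i' => by
              by_cases h : i = i' <;> simp [h, he_inj.eq_iff]
            rw [Finset.sum_congr rfl fun i' _ => h1 i', Finset.sum_ite_eq]
            simp
          · push_neg at hx
            have h0 : pstar x = 0 := by
              simp only [hpstar]
              exact Finset.sum_eq_zero fun i _ => by rw [if_neg (hx i)]
            rw [h0, zero_mul]
            exact (Finset.sum_eq_zero fun i _ => by rw [if_neg (hx i)]).symm
        rw [Finset.sum_congr rfl fun x _ => hterm x, Finset.sum_comm]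
        refine Finset.sum_congr rfl fun i _ => ?_
        rw [Finset.sum_ite_eq']
        simp
      rw [hS]
      have hlogdiv : ∀ i : Fin d, (d:ℝ)⁻¹ * Real.log ((d:ℝ)⁻¹ / q (e i))
          = (d:ℝ)⁻¹ * (-Real.log d) - (d:ℝ)⁻¹ * Real.log (q (e i)) := fun i => by
        rw [Real.log_div (by positivity) (hqpos i).ne', Real.log_inv, mul_sub]
      rw [Finset.sum_congr rfl fun i _ => hlogdiv i, Finset.sum_sub_distrib,
        Finset.sum_const, Finset.card_univ, Fintype.card_fin, nsmul_eq_mul, ← Finset.mul_sum]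
      have h1 : (d:ℝ)⁻¹ * (∑ i : Fin d, Real.log (q (e i)))
          ≤ (d:ℝ)⁻¹ * (-(2*(d:ℝ)*Real.log d)) :=
        mul_le_mul_of_nonneg_left (hsum_log ▸ hlogprod) (by positivity)
      have h2 : (d:ℝ) * ((d:ℝ)⁻¹ * (-Real.log d)) = -Real.log d := by field_simp
      have h3 : (d:ℝ)⁻¹ * (-(2*(d:ℝ)*Real.log d)) = -(2*Real.log d) := by field_simp
      rw [h3] at h1
      rw [h2]
      linarith
    · rw [KL, if_neg hsupp]
      exact le_top
  have hmin : min (Real.log (d₁:ℝ)) (Real.log (d₃:ℝ)) = Real.log (d:ℝ) := by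
    rcases le_total d₁ d₃ with h | h
    · rw [show (d:ℝ) = (d₁:ℝ) from by rw [hdd, min_eq_left h],
        min_eq_left (Real.log_le_log hd₁ (by exact_mod_cast h))]
    · rw [show (d:ℝ) = (d₃:ℝ) from by rw [hdd, min_eq_right h],
        min_eq_right (Real.log_le_log hd₃ (by exact_mod_cast h))]
  refine le_antisymm (iSup₂_le hub) ?_
  refine le_iSup₂_of_le pstar hps ?_
  rw [show ((min (Real.log (d₁:ℝ)) (Real.log (d₃:ℝ)) : ℝ) : EReal)
    = ((Real.log (d:ℝ) : ℝ) : EReal) from by rw [hmin]]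
  exact le_iInf₂ hlow
end

section
/- Let a, b ≥ 1 and d ≥ 0 be integers. Let I = {(r,j) ∈ ℕ² : 0 ≤ j ≤ b, 0 ≤ r ≤ a + d·(b−j)} and for (r,j) ∈ I set c_{r,j} = C(b,j) · Σ_{0≤i≤a, 0≤k≤d(b−j), i+k=r} C(a,i)·C(d(b−j),k), where C denotes binomial coefficients. Let T ⊆ Δ_I be the trapezoid model: the set of points p such that p_{r,j} = c_{r,j}·s^r·(1−s)^{a+d(b−j)−r}·t^j·(1−t)^{b−j} for some s, t ∈ (0,1). Then for every u ∈ Δ_I, inf_{q∈T} D(u‖q) ≤ (a + b·d + b)·log 2; in particular sup_{u∈Δ_I} inf_{q∈T} D(u‖q) ≤ (a + b·d + b)·log 2. -/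
open scoped BigOperators Pointwise

attribute [local instance] Classical.propDecidable

/-- the divergence from the trapezoid model `T_{a,b,d}` of any point of the
simplex is at most `(a + b·d + b)·log 2`; in particular so is the maximum divergence.
The index set `I = {(r,j) : 0 ≤ j ≤ b, 0 ≤ r ≤ a + d(b−j)}` is encoded as a subtype of
`Fin (a+d·b+1) × Fin (b+1)`. -/
theorem stmt19 {a b d : ℕ} (ha : 1 ≤ a) (hb : 1 ≤ b)
    (T : Set ({x : Fin (a + d * b + 1) × Fin (b + 1) //
        (x.1 : ℕ) ≤ a + d * (b - (x.2 : ℕ))} → ℝ))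
    (hT : T = {p | ∃ s t : ℝ, s ∈ Set.Ioo (0 : ℝ) 1 ∧ t ∈ Set.Ioo (0 : ℝ) 1 ∧
        ∀ x : {x : Fin (a + d * b + 1) × Fin (b + 1) //
            (x.1 : ℕ) ≤ a + d * (b - (x.2 : ℕ))},
          p x = ((Nat.choose b (x.1.2 : ℕ) *
              ∑ i ∈ Finset.range (a + 1), ∑ kk ∈ Finset.range (d * (b - (x.1.2 : ℕ)) + 1),
                if i + kk = (x.1.1 : ℕ)
                then Nat.choose a i * Nat.choose (d * (b - (x.1.2 : ℕ))) kk
                else 0 : ℕ) : ℝ) *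
            s ^ (x.1.1 : ℕ) * (1 - s) ^ (a + d * (b - (x.1.2 : ℕ)) - (x.1.1 : ℕ)) *
            t ^ (x.1.2 : ℕ) * (1 - t) ^ (b - (x.1.2 : ℕ))}) :
    (∀ u ∈ simplex {x : Fin (a + d * b + 1) × Fin (b + 1) //
        (x.1 : ℕ) ≤ a + d * (b - (x.2 : ℕ))},
      divFrom T u ≤ ((((a + b * d + b : ℕ) : ℝ) * Real.log 2 : ℝ) : EReal)) ∧
    (⨆ u ∈ simplex {x : Fin (a + d * b + 1) × Fin (b + 1) //
        (x.1 : ℕ) ≤ a + d * (b - (x.2 : ℕ))}, divFrom T u)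
      ≤ ((((a + b * d + b : ℕ) : ℝ) * Real.log 2 : ℝ) : EReal) := by

  classical
  have key : ∀ u ∈ simplex {x : Fin (a + d * b + 1) × Fin (b + 1) //
        (x.1 : ℕ) ≤ a + d * (b - (x.2 : ℕ))},
      divFrom T u ≤ ((((a + b * d + b : ℕ) : ℝ) * Real.log 2 : ℝ) : EReal) := by
    intro u hu
    set N := a + b * d + b with hN
    set q : {x : Fin (a + d * b + 1) × Fin (b + 1) //
        (x.1 : ℕ) ≤ a + d * (b - (x.2 : ℕ))} → ℝ := fun x =>
      ((Nat.choose b (x.1.2 : ℕ) *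
              ∑ i ∈ Finset.range (a + 1), ∑ kk ∈ Finset.range (d * (b - (x.1.2 : ℕ)) + 1),
                if i + kk = (x.1.1 : ℕ)
                then Nat.choose a i * Nat.choose (d * (b - (x.1.2 : ℕ))) kk
                else 0 : ℕ) : ℝ) *
            (1/2 : ℝ) ^ (x.1.1 : ℕ) *
            (1 - (1/2 : ℝ)) ^ (a + d * (b - (x.1.2 : ℕ)) - (x.1.1 : ℕ)) *
            (1/2 : ℝ) ^ (x.1.2 : ℕ) * (1 - (1/2 : ℝ)) ^ (b - (x.1.2 : ℕ)) with hq
    have hqT : q ∈ T := by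
      rw [hT]
      exact ⟨1/2, 1/2, ⟨by norm_num, by norm_num⟩, ⟨by norm_num, by norm_num⟩,
        fun x => rfl⟩
    have hqpos : ∀ x : {x : Fin (a + d * b + 1) × Fin (b + 1) //
        (x.1 : ℕ) ≤ a + d * (b - (x.2 : ℕ))}, (1/2 : ℝ) ^ N ≤ q x := by
      intro x
      set r := (x.1.1 : ℕ) with hr
      set j := (x.1.2 : ℕ) with hj
      set m := d * (b - j) with hm
      have hrm : r ≤ a + m := x.2
      have hjb : j ≤ b := Nat.lt_succ_iff.mp x.1.2.2
      have hc : 1 ≤ Nat.choose b j *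
          ∑ i ∈ Finset.range (a + 1), ∑ kk ∈ Finset.range (m + 1),
            if i + kk = r then Nat.choose a i * Nat.choose m kk else 0 := by
        have hS : 0 < ∑ i ∈ Finset.range (a + 1), ∑ kk ∈ Finset.range (m + 1),
            if i + kk = r then Nat.choose a i * Nat.choose m kk else 0 := by
          refine Finset.sum_pos' (fun _ _ => Nat.zero_le _)
            ⟨min a r, Finset.mem_range.2 (by omega), ?_⟩
          refine Finset.sum_pos' (fun _ _ => Nat.zero_le _)
            ⟨r - min a r, Finset.mem_range.2 (by omega), ?_⟩
          rw [if_pos (by omega)]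
          exact Nat.mul_pos (Nat.choose_pos (min_le_left _ _))
            (Nat.choose_pos (by omega))
        exact Nat.one_le_iff_ne_zero.2
          (Nat.mul_ne_zero (Nat.choose_pos hjb).ne' hS.ne')
      have hc' : (1 : ℝ) ≤ ((Nat.choose b j *
          ∑ i ∈ Finset.range (a + 1), ∑ kk ∈ Finset.range (m + 1),
            if i + kk = r then Nat.choose a i * Nat.choose m kk else 0 : ℕ) : ℝ) := by
        exact_mod_cast hc
      have hqx : q x = ((Nat.choose b j *
          ∑ i ∈ Finset.range (a + 1), ∑ kk ∈ Finset.range (m + 1),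
            if i + kk = r then Nat.choose a i * Nat.choose m kk else 0 : ℕ) : ℝ) *
          (1/2 : ℝ) ^ (a + m + b) := by
        have e : (1 - (1/2 : ℝ)) = 1/2 := by norm_num
        have e2 : r + (a + m - r) + (j + (b - j)) = a + m + b := by omega
        rw [hq]
        simp only [e, ← hr, ← hj, ← hm]
        rw [← e2, pow_add, pow_add, pow_add]
        ring
      calc (1/2 : ℝ) ^ N ≤ (1/2 : ℝ) ^ (a + m + b) := by
            apply pow_le_pow_of_le_one (by norm_num) (by norm_num)
            have : m ≤ b * d :=
              le_trans (Nat.mul_le_mul_left d (Nat.sub_le b j)) (le_of_eq (mul_comm d b))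
            omega
        _ ≤ q x := by rw [hqx]; nlinarith [pow_pos (by norm_num : (0:ℝ) < 1/2) (a + m + b)]
    have hq0 : ∀ i, 0 < q i := fun i =>
      lt_of_lt_of_le (pow_pos (by norm_num) N) (hqpos i)
    obtain ⟨hu0, hu1⟩ := hu
    have hub : ∀ i, u i ≤ 1 := by
      intro i
      rw [← hu1]
      exact Finset.single_le_sum (fun j _ => hu0 j) (Finset.mem_univ i)
    have hsum : ∑ i, u i * Real.log (u i / q i) ≤ ((N : ℕ) : ℝ) * Real.log 2 := by
      calc ∑ i, u i * Real.log (u i / q i)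
          ≤ ∑ i, u i * (((N : ℕ) : ℝ) * Real.log 2) := by
            apply Finset.sum_le_sum
            intro i _
            rcases eq_or_lt_of_le (hu0 i) with h | h
            · simp [← h]
            · apply mul_le_mul_of_nonneg_left _ (hu0 i)
              have hdiv : u i / q i ≤ 2 ^ N := by
                rw [div_le_iff₀ (hq0 i)]
                calc u i ≤ 1 := hub i
                  _ = 2 ^ N * (1/2 : ℝ) ^ N := by
                      rw [← mul_pow]; norm_num
                  _ ≤ 2 ^ N * q i := by
                      exact mul_le_mul_of_nonneg_left (hqpos i) (by positivity)
              calc Real.log (u i / q i) ≤ Real.log (2 ^ N) :=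
                    Real.log_le_log (div_pos h (hq0 i)) hdiv
                _ = ((N : ℕ) : ℝ) * Real.log 2 := by rw [Real.log_pow]
        _ = ((N : ℕ) : ℝ) * Real.log 2 := by
            rw [← Finset.sum_mul, hu1, one_mul]
    have hKL : KL u q = ((∑ i, u i * Real.log (u i / q i) : ℝ) : EReal) := by
      rw [KL, if_pos]
      intro i hi
      exact absurd hi (hq0 i).ne'
    have hstep : divFrom T u ≤ KL u q := by
      rw [divFrom]
      exact iInf_le_of_le q (iInf_le _ hqT)
    refine hstep.trans ?_
    rw [hKL]
    exact_mod_cast hsum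
  refine ⟨key, ?_⟩
  exact iSup₂_le key
end
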